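/- Let r = (r₁,…,rₙ) ∈ ℕⁿ with each r_i ≥ 3 odd, and let C_r ⊆ B[0,1] = [−1,1]ⁿ be the r-self-affine Sierpiński carpet: the attractor (unique nonempty compact set K with K = ⋃_f f(K)) of the iterated function system consisting of the ∏_i r_i − 1 affine contractions mapping [−1,1]ⁿ onto the closed boxes of side length 2/r_i along the i-th axis obtained by subdividing [−1,1]ⁿ into a ∏_i r_i grid and omitting the central box. Let t ∈ (0,1) and let A be the diagonal n×n matrix with diagonal entries (1/r_j)^t for j = 1,…,n. Then, in the sup metric, τ_A(C_r) = t^{−1}·min_{1≤i≤n} log_{r_i}((r_i − 1)/2). -/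

import Mathlib

open Metric Set Topology Filter
open scoped ENNReal Classical

noncomputable section

/-- The affine box `A^s(B[0,1]) + z`, where `A` is the diagonal matrix with
diagonal entries `β j`, so `A^s(B[0,1]) + z = {x : |x j - z j| ≤ (β j)^s for all j}`. -/
def affBox {n : ℕ} (β : Fin n → ℝ) (s : ℝ) (z : Fin n → ℝ) : Set (Fin n → ℝ) :=
  {x | ∀ j, |x j - z j| ≤ (β j) ^ s}

/-- The size `S_A(F)` of `F` with respect to the diagonal matrix with entries `β`. -/
def sizeWrt {n : ℕ} (β : Fin n → ℝ) (F : Set (Fin n → ℝ)) : ℝ :=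
  sInf {t | 0 < t ∧ ∃ z, F ⊆ affBox β (1 / t) z}

/-- `G` is a gap (a connected component of the complement) of `C`. -/
def IsGap {n : ℕ} (C G : Set (Fin n → ℝ)) : Prop :=
  ∃ x ∈ Cᶜ, G = connectedComponentIn Cᶜ x

/-- `G` is a bounded gap of `C`. -/
def IsBoundedGap {n : ℕ} (C G : Set (Fin n → ℝ)) : Prop :=
  IsGap C G ∧ Bornology.IsBounded G

/-- The unbounded gap `E` of `C`: the union of the unbounded connected
components of the complement of `C`. -/
def unboundedGap {n : ℕ} (C : Set (Fin n → ℝ)) : Set (Fin n → ℝ) :=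
  {x | x ∈ Cᶜ ∧ ¬ Bornology.IsBounded (connectedComponentIn Cᶜ x)}

/-- An enumeration `(G_k)_{k ∈ J}` of the bounded gaps of `C`, in non-increasing
order of size with respect to `β`. -/
structure GapEnum {n : ℕ} (β : Fin n → ℝ) (C : Set (Fin n → ℝ)) where
  J : Set ℕ
  G : ℕ → Set (Fin n → ℝ)
  downward : ∀ k l : ℕ, k ≤ l → l ∈ J → k ∈ J
  isGap : ∀ k ∈ J, IsBoundedGap C (G k)
  inj : ∀ k ∈ J, ∀ l ∈ J, G k = G l → k = l
  surj : ∀ G', IsBoundedGap C G' → ∃ k ∈ J, G k = G'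
  anti : ∀ k ∈ J, ∀ l ∈ J, k ≤ l → sizeWrt β (G l) ≤ sizeWrt β (G k)

/-- The gap distance `GD_A(m, C)` with respect to the enumeration `e`. -/
def gapDist {n : ℕ} (β : Fin n → ℝ) (C : Set (Fin n → ℝ)) (e : GapEnum β C) (m : ℕ) : ℝ :=
  sInf {t | 0 < t ∧ ∃ z, (affBox β (1 / t) z ∩ e.G m).Nonempty ∧
    (affBox β (1 / t) z ∩ ((⋃ i ∈ e.J ∩ Iio m, e.G i) ∪ unboundedGap C)).Nonempty}

/-- Extended-real-valued inverse, with `0⁻¹ = ∞`. -/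
def invE (s : ℝ) : EReal := if s = 0 then ⊤ else ((s⁻¹ : ℝ) : EReal)

/-- Affine thickness `τ_A(C)` of `C` with respect to the diagonal matrix with entries `β`,
computed from the enumeration `e` of the bounded gaps of `C`. -/
def thicknessA {n : ℕ} (β : Fin n → ℝ) (C : Set (Fin n → ℝ)) (e : GapEnum β C) : EReal :=
  if e.J = ∅ then (if (interior C).Nonempty then ⊤ else ⊥)
  else if ∃ k ∈ e.J, gapDist β C e k = 0 then ⊥
  else ⨅ k ∈ e.J, (invE (sizeWrt β (e.G k)) - invE (gapDist β C e k))

/-- Open sets `U`, `V` are linked. -/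
def Linked {n : ℕ} (U V : Set (Fin n → ℝ)) : Prop :=
  (U ∩ V).Nonempty ∧ (frontier U \ V).Nonempty ∧ (frontier V \ U).Nonempty

/-- Compact sets `C₁`, `C₂` are BG linked. -/
def BGLinked {n : ℕ} (C₁ C₂ : Set (Fin n → ℝ)) : Prop :=
  ∀ G₁ G₂, IsBoundedGap C₁ G₁ → IsBoundedGap C₂ G₂ → Linked G₁ G₂ ∨ G₁ ∩ G₂ = ∅

/-- `C₁, C₂ ⊆ B[0,1]` are a strongly refinable pair for the diagonal matrix with entries `β`. -/
def StronglyRefinable {n : ℕ} (β : Fin n → ℝ) (C₁ C₂ : Set (Fin n → ℝ)) : Prop :=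
  ∃ C₁' C₂' : Set (Fin n → ℝ), IsCompact C₁' ∧ IsCompact C₂' ∧
    C₁' ⊆ closedBall 0 1 ∧ C₂' ⊆ closedBall 0 1 ∧
    BGLinked C₁' C₂' ∧
    (∃ G₁, IsBoundedGap C₁' G₁ ∧ ¬ frontier G₁ ⊆ unboundedGap C₂') ∧
    (∃ G₂, IsBoundedGap C₂' G₂ ∧ ¬ frontier G₂ ⊆ unboundedGap C₁') ∧
    (∀ e₁ : GapEnum β C₁, ∀ e₂ : GapEnum β C₂, ∃ e₁' : GapEnum β C₁', ∃ e₂' : GapEnum β C₂',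
      thicknessA β C₁ e₁ + thicknessA β C₂ e₂ ≤ thicknessA β C₁' e₁' + thicknessA β C₂' e₂') ∧
    C₁' ∩ C₂' ⊆ C₁ ∩ C₂

/-- The distance between two sets. -/
def setDist {n : ℕ} (A B : Set (Fin n → ℝ)) : ℝ :=
  sInf {r | ∃ a ∈ A, ∃ b ∈ B, r = dist a b}

/-- An enumeration of the bounded gaps of `C` in non-increasing order of diameter. -/
structure DiamEnum {n : ℕ} (C : Set (Fin n → ℝ)) where
  J : Set ℕ
  G : ℕ → Set (Fin n → ℝ)
  downward : ∀ k l : ℕ, k ≤ l → l ∈ J → k ∈ J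
  isGap : ∀ k ∈ J, IsBoundedGap C (G k)
  inj : ∀ k ∈ J, ∀ l ∈ J, G k = G l → k = l
  surj : ∀ G', IsBoundedGap C G' → ∃ k ∈ J, G k = G'
  anti : ∀ k ∈ J, ∀ l ∈ J, k ≤ l → Metric.diam (G l) ≤ Metric.diam (G k)

/-- The Falconer–Yavicoli thickness `τ(C)`, computed from the enumeration `e` of
the bounded gaps of `C` in non-increasing order of diameter. -/
def FYthickness {n : ℕ} (C : Set (Fin n → ℝ)) (e : DiamEnum C) : ℝ≥0∞ :=
  if e.J = ∅ then (if (interior C).Nonempty then ⊤ else 0)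
  else ⨅ k ∈ e.J, ENNReal.ofReal
    (setDist (e.G k) (unboundedGap C ∪ ⋃ j ∈ e.J ∩ Iio k, e.G j) / Metric.diam (e.G k))

end

noncomputable section
namespace SAC
set_option linter.unusedSectionVars false

variable {n : ℕ}

/-- closed box -/
def bx (c ρ : Fin n → ℝ) : Set (Fin n → ℝ) := {x | ∀ i, |x i - c i| ≤ ρ i}
/-- open box -/
def ob (c ρ : Fin n → ℝ) : Set (Fin n → ℝ) := {x | ∀ i, |x i - c i| < ρ i}

variable (r : Fin n → ℕ)

/-- half-side of level-σ cells -/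
def hw (σ : ℕ) : Fin n → ℝ := fun i => ((r i : ℝ))⁻¹ ^ σ

/-- center offset of subcell `j` at level `σ` -/
def off (σ : ℕ) (j : Fin n → ℕ) : Fin n → ℝ :=
  fun i => (2 * (j i : ℝ) - (r i : ℝ) - 1) * ((r i : ℝ))⁻¹ ^ σ

variable (J : Set (Fin n → ℕ))

/-- centers of admissible level-σ cells -/
def centers : ℕ → Set (Fin n → ℝ)
  | 0 => {0}
  | σ+1 => ⋃ c ∈ centers σ, ⋃ j ∈ J, {fun i => c i + off r (σ+1) j i}

/-- union of admissible level-σ cells -/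
def KK (σ : ℕ) : Set (Fin n → ℝ) := ⋃ c ∈ centers r J σ, bx c (hw r σ)

lemma centers_zero : centers r J 0 = {0} := rfl
lemma centers_succ (σ : ℕ) :
    centers r J (σ+1) = ⋃ c ∈ centers r J σ, ⋃ j ∈ J, {fun i => c i + off r (σ+1) j i} := rfl

section basic
variable (hr3 : ∀ i, 3 ≤ r i)

include hr3

lemma hr0 (i : Fin n) : (0:ℝ) < r i := by
  have := hr3 i; positivity

lemma hr1 (i : Fin n) : (1:ℝ) < r i := by
  have : (3:ℝ) ≤ r i := by exact_mod_cast hr3 i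
  linarith

lemma hw_pos (σ : ℕ) (i : Fin n) : 0 < hw r σ i := by
  have := hr0 r hr3 i
  simp only [hw]
  positivity

lemma hw_le_one (σ : ℕ) (i : Fin n) : hw r σ i ≤ 1 := by
  have h1 := hr1 r hr3 i
  simp only [hw]
  exact pow_le_one₀ (by positivity) (by rw [inv_le_one_iff₀]; right; linarith)

lemma hw_succ (σ : ℕ) (i : Fin n) : hw r (σ+1) i = hw r σ i * ((r i:ℝ))⁻¹ := by
  simp [hw, pow_succ]

lemma hw_mul (σ : ℕ) (i : Fin n) : hw r σ i = (r i : ℝ) * hw r (σ+1) i := by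
  have := hr0 r hr3 i
  rw [hw_succ r hr3]
  field_simp

lemma hw_succ_lt (σ : ℕ) (i : Fin n) : hw r (σ+1) i < hw r σ i := by
  have h0 := hw_pos r hr3 (σ+1) i
  have := hr1 r hr3 i
  rw [hw_mul r hr3 σ i]
  nlinarith

end basic


section geom
variable (hr3 : ∀ i, 3 ≤ r i)
variable (hJ1 : ∀ j ∈ J, ∀ i, 1 ≤ j i ∧ j i ≤ r i)
include hr3

lemma off_abs_le (σ : ℕ) {j : Fin n → ℕ} (hj : ∀ i, 1 ≤ j i ∧ j i ≤ r i) (i : Fin n) :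
    |off r σ j i| ≤ ((r i : ℝ) - 1) * hw r σ i := by
  have h0 := hw_pos r hr3 σ i
  have h1 : (1:ℝ) ≤ j i := by exact_mod_cast (hj i).1
  have h2 : (j i : ℝ) ≤ r i := by exact_mod_cast (hj i).2
  have : |2 * (j i : ℝ) - (r i : ℝ) - 1| ≤ (r i : ℝ) - 1 := by
    rw [abs_le]; constructor <;> linarith
  calc |off r σ j i| = |2 * (j i : ℝ) - (r i : ℝ) - 1| * hw r σ i := by
        simp [off, abs_mul, hw, abs_of_pos, h0, abs_of_nonneg (le_of_lt h0)]
    _ ≤ ((r i : ℝ) - 1) * hw r σ i := by nlinarith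

include hJ1

lemma centers_bound (σ : ℕ) : ∀ c ∈ centers r J σ, ∀ i, |c i| ≤ 1 - hw r σ i := by
  induction σ with
  | zero => intro c hc i; simp [centers_zero] at hc; simp [hc, hw]
  | succ σ ih =>
    intro c hc i
    simp only [centers_succ, mem_iUnion, exists_prop] at hc
    obtain ⟨c₀, hc₀, j, hjJ, rfl⟩ := hc
    have h1 := ih c₀ hc₀ i
    have h2 := off_abs_le r hr3 (σ+1) (hJ1 j hjJ) i
    have h3 := hw_mul r hr3 σ i
    calc |c₀ i + off r (σ+1) j i| ≤ |c₀ i| + |off r (σ+1) j i| := abs_add_le _ _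
      _ ≤ 1 - hw r σ i + ((r i:ℝ) - 1) * hw r (σ+1) i := by linarith
      _ = 1 - hw r (σ+1) i := by rw [h3]; ring

lemma centers_sep (σ : ℕ) : ∀ c ∈ centers r J σ, ∀ c' ∈ centers r J σ,
    c = c' ∨ ∃ i, 2 * hw r σ i ≤ |c i - c' i| := by
  induction σ with
  | zero =>
    intro c hc c' hc'
    simp [centers_zero] at hc hc'; left; rw [hc, hc']
  | succ σ ih =>
    intro c hc c' hc'
    simp only [centers_succ, mem_iUnion, exists_prop] at hc hc'
    obtain ⟨c₀, hc₀, j, hjJ, rfl⟩ := hc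
    obtain ⟨c₀', hc₀', j', hjJ', rfl⟩ := hc'
    rcases ih c₀ hc₀ c₀' hc₀' with h | ⟨i, hi⟩
    · subst h
      by_cases hjj : j = j'
      · subst hjj; left; rfl
      · right
        have : ∃ i, j i ≠ j' i := by
          by_contra hcon; push_neg at hcon; exact hjj (funext hcon)
        obtain ⟨i, hi⟩ := this
        refine ⟨i, ?_⟩
        have h0 := hw_pos r hr3 (σ+1) i
        have hne : (j i : ℝ) ≠ (j' i : ℝ) := by exact_mod_cast hi
        have h1 : (1:ℝ) ≤ |(j i : ℝ) - (j' i : ℝ)| := by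
          have : (j i : ℝ) - (j' i : ℝ) ≠ 0 := sub_ne_zero.mpr hne
          have hint : ∃ z : ℤ, (j i : ℝ) - (j' i : ℝ) = z := ⟨(j i : ℤ) - (j' i : ℤ), by push_cast; ring⟩
          obtain ⟨z, hz⟩ := hint
          rw [hz]
          have : z ≠ 0 := by
            intro h; rw [h] at hz; simp at hz; exact this hz
          exact_mod_cast Int.one_le_abs (by exact_mod_cast this)
        have : c₀ i + off r (σ+1) j i - (c₀ i + off r (σ+1) j' i)
            = ((j i : ℝ) - (j' i : ℝ)) * (2 * hw r (σ+1) i) := by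
          simp only [off, hw]; ring
        rw [this, abs_mul, abs_of_pos (show (0:ℝ) < 2 * hw r (σ+1) i by linarith)]
        nlinarith
    · right
      refine ⟨i, ?_⟩
      have h2 := off_abs_le r hr3 (σ+1) (hJ1 j hjJ) i
      have h2' := off_abs_le r hr3 (σ+1) (hJ1 j' hjJ') i
      have h3 := hw_mul r hr3 σ i
      have h4 : (3:ℝ) ≤ r i := by exact_mod_cast hr3 i
      have h0 := hw_pos r hr3 (σ+1) i
      have habs : |c₀ i - c₀' i| - |off r (σ+1) j i| - |off r (σ+1) j' i|
          ≤ |c₀ i + off r (σ+1) j i - (c₀' i + off r (σ+1) j' i)| := by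
        have := abs_sub_abs_le_abs_sub (c₀ i - c₀' i)
          (- (off r (σ+1) j i) + off r (σ+1) j' i)
        have e1 : c₀ i - c₀' i - (-(off r (σ+1) j i) + off r (σ+1) j' i)
            = c₀ i + off r (σ+1) j i - (c₀' i + off r (σ+1) j' i) := by ring
        have e2 : |(-(off r (σ+1) j i) + off r (σ+1) j' i)|
            ≤ |off r (σ+1) j i| + |off r (σ+1) j' i| := by
          calc _ ≤ |(-(off r (σ+1) j i))| + |off r (σ+1) j' i| := abs_add_le _ _
            _ = _ := by rw [abs_neg]
        rw [e1] at this; linarith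
      have : 2 * hw r σ i - ((r i:ℝ) -1) * hw r (σ+1) i - ((r i:ℝ)-1) * hw r (σ+1) i
          ≥ 2 * hw r (σ+1) i := by nlinarith
      linarith

omit hJ1 in
lemma subcell_subset {σ : ℕ} {c : Fin n → ℝ} {j : Fin n → ℕ} (hj : ∀ i, 1 ≤ j i ∧ j i ≤ r i) :
    bx (fun i => c i + off r (σ+1) j i) (hw r (σ+1)) ⊆ bx c (hw r σ) := by
  intro x hx i
  have h1 := hx i
  have h2 := off_abs_le r hr3 (σ+1) hj i
  have h3 := hw_mul r hr3 σ i
  calc |x i - c i| = |(x i - (c i + off r (σ+1) j i)) + off r (σ+1) j i| := by ring_nf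
    _ ≤ |x i - (c i + off r (σ+1) j i)| + |off r (σ+1) j i| := abs_add_le _ _
    _ ≤ hw r (σ+1) i + ((r i:ℝ)-1) * hw r (σ+1) i := by linarith
    _ = hw r σ i := by rw [h3]; ring

lemma KK_succ_subset (σ : ℕ) : KK r J (σ+1) ⊆ KK r J σ := by
  intro x hx
  simp only [KK, mem_iUnion, exists_prop] at hx ⊢
  obtain ⟨c, hc, hxc⟩ := hx
  rw [centers_succ] at hc
  simp only [mem_iUnion, exists_prop] at hc
  obtain ⟨c₀, hc₀, j, hjJ, rfl⟩ := hc
  exact ⟨c₀, hc₀, subcell_subset r hr3 (hJ1 j hjJ) hxc⟩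

lemma KK_anti : ∀ {σ σ' : ℕ}, σ ≤ σ' → KK r J σ' ⊆ KK r J σ := by
  intro σ σ' h
  induction σ' with
  | zero => simp at h; subst h; exact subset_rfl
  | succ σ'' ih =>
    rcases Nat.lt_or_ge σ (σ''+1) with h' | h'
    · exact (KK_succ_subset r J hr3 hJ1 σ'').trans (ih (Nat.lt_succ_iff.mp h'))
    · have : σ = σ'' + 1 := le_antisymm h h'
      subst this; exact subset_rfl

end geom



section gridlem

/-- choose a grid index containing a scaled coordinate -/
lemma grid1 (b : ℕ) (hb : 3 ≤ b) (v : ℝ) (hv : |v| ≤ b) :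
    ∃ g : ℕ, 1 ≤ g ∧ g ≤ b ∧ |v - (2*(g:ℝ) - b - 1)| ≤ 1 := by
  have hb0 : (0:ℝ) < b := by positivity
  set a : ℝ := (v + b) / 2 with ha
  have ha0 : 0 ≤ a := by rw [ha]; rw [abs_le] at hv; linarith
  have hab : a ≤ b := by rw [ha]; rw [abs_le] at hv; linarith
  by_cases h0 : ⌈a⌉₊ = 0
  · refine ⟨1, le_refl _, by omega, ?_⟩
    have haz : a = 0 := le_antisymm (Nat.ceil_eq_zero.mp h0) ha0
    have hv' : v = -b := by rw [ha] at haz; linarith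
    rw [hv', show (-(b:ℝ) - (2*((1:ℕ):ℝ) - b - 1)) = -1 by push_cast; ring]
    simp
  · refine ⟨⌈a⌉₊, by omega, Nat.ceil_le.mpr hab, ?_⟩
    have h1 : a ≤ (⌈a⌉₊ : ℝ) := Nat.le_ceil a
    have h2 : (⌈a⌉₊ : ℝ) < a + 1 := Nat.ceil_lt_add_one ha0
    rw [abs_le]; constructor
    · rw [ha] at h2 ⊢; linarith
    · rw [ha] at h1 ⊢; linarith

lemma grid_noncentral_pos (b : ℕ) (hb : 3 ≤ b) (v : ℝ) (hvb : v ≤ b) (h1v : 1 ≤ v) :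
    ∃ g : ℕ, 1 ≤ g ∧ g ≤ b ∧ 2*(g:ℝ) - b - 1 ≠ 0 ∧ |v - (2*(g:ℝ) - b - 1)| ≤ 1 := by
  have hb0 : (0:ℝ) < b := by positivity
  have hb3 : (3:ℝ) ≤ b := by exact_mod_cast hb
  set a : ℝ := (v + b) / 2 with ha
  have ha1 : (1 + b)/2 ≤ a := by rw [ha]; linarith
  have hab : a ≤ b := by rw [ha]; linarith
  have ha0 : 0 ≤ a := by linarith
  have h1 : a ≤ (⌈a⌉₊ : ℝ) := Nat.le_ceil a
  have h2 : (⌈a⌉₊ : ℝ) < a + 1 := Nat.ceil_lt_add_one ha0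
  by_cases hc : 2*((⌈a⌉₊:ℕ):ℝ) - b - 1 = 0
  · -- ceil a is exactly the center; use center + 1
    have hceq : ((⌈a⌉₊:ℕ):ℝ) = ((b:ℝ)+1)/2 := by linarith
    have hac : a ≤ ((b:ℝ)+1)/2 := by rw [← hceq]; exact h1
    have haeq : a = ((b:ℝ)+1)/2 := by
      refine le_antisymm hac ?_
      calc ((b:ℝ)+1)/2 = (1+b)/2 := by ring
        _ ≤ a := ha1
    have hveq : v = 1 := by rw [ha] at haeq; linarith
    refine ⟨⌈a⌉₊ + 1, by omega, ?_, ?_, ?_⟩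
    · have hle : ((⌈a⌉₊:ℕ):ℝ) + 1 ≤ b := by rw [hceq]; linarith
      exact_mod_cast hle
    · push_cast; rw [hceq]; intro h; linarith
    · push_cast
      rw [hveq, hceq, show (1 - (2*(((b:ℝ)+1)/2+1) - b - 1)) = -1 by ring]
      norm_num
  · refine ⟨⌈a⌉₊, ?_, Nat.ceil_le.mpr hab, hc, ?_⟩
    · have hpos : 0 < a := by linarith
      have := Nat.ceil_pos.mpr hpos
      omega
    · rw [abs_le]; constructor
      · rw [ha] at h2 ⊢; linarith
      · rw [ha] at h1 ⊢; linarith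

/-- choose a non-central grid index when the coordinate is away from the middle -/
lemma grid_noncentral (b : ℕ) (hb : 3 ≤ b) (v : ℝ) (hv : |v| ≤ b) (h1v : 1 ≤ |v|) :
    ∃ g : ℕ, 1 ≤ g ∧ g ≤ b ∧ 2*(g:ℝ) - b - 1 ≠ 0 ∧ |v - (2*(g:ℝ) - b - 1)| ≤ 1 := by
  rw [abs_le] at hv
  rcases abs_cases v with ⟨hv1, _⟩ | ⟨hv1, _⟩
  · exact grid_noncentral_pos b hb v hv.2 (by rw [hv1] at h1v; exact h1v)
  · obtain ⟨g, hg1, hg2, hgc, hgle⟩ :=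
      grid_noncentral_pos b hb (-v) (by linarith) (by rw [hv1] at h1v; exact h1v)
    refine ⟨b + 1 - g, by omega, by omega, ?_, ?_⟩
    · have : ((b + 1 - g : ℕ) : ℝ) = (b:ℝ) + 1 - g := by
        have : g ≤ b + 1 := by omega
        push_cast [Nat.cast_sub this]; ring
      rw [this]; intro h; apply hgc; linarith
    · have hcast : ((b + 1 - g : ℕ) : ℝ) = (b:ℝ) + 1 - g := by
        have : g ≤ b + 1 := by omega
        push_cast [Nat.cast_sub this]; ring
      rw [hcast, show (v - (2*((b:ℝ) + 1 - g) - b - 1)) = -((-v) - (2*(g:ℝ) - b - 1)) by ring,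
        abs_neg]
      exact hgle

end gridlem


section descend
variable (hr3 : ∀ i, 3 ≤ r i) (hrodd : ∀ i, Odd (r i))
variable (hJdef : ∀ j, j ∈ J ↔ ((∀ i, 1 ≤ j i ∧ j i ≤ r i) ∧ j ≠ fun i => (r i + 1) / 2))

include hr3

lemma ctr_coef (hrodd : ∀ i, Odd (r i)) (i : Fin n) :
    2*((((r i + 1)/2 : ℕ)):ℝ) - r i - 1 = 0 := by
  obtain ⟨k, hk⟩ := hrodd i
  have h2 : (r i + 1)/2 = k + 1 := by omega
  rw [h2, hk]; push_cast; ring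

/-- scaled subcell membership -/
lemma mem_subcell_iff {σ : ℕ} {c x : Fin n → ℝ} {j : Fin n → ℕ} :
    x ∈ bx (fun i => c i + off r (σ+1) j i) (hw r (σ+1)) ↔
      ∀ i, |(x i - c i)/(hw r (σ+1) i) - (2*(j i:ℝ) - r i - 1)| ≤ 1 := by
  constructor <;> intro H i <;> have hh := hw_pos r hr3 (σ+1) i <;>
    have e : x i - (c i + off r (σ+1) j i)
        = ((x i - c i)/(hw r (σ+1) i) - (2*(j i:ℝ) - r i - 1)) * hw r (σ+1) i := by
      rw [show off r (σ+1) j i = (2*(j i:ℝ) - r i - 1) * hw r (σ+1) i from rfl]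
      have hq : hw r (σ+1) i ≠ 0 := ne_of_gt hh
      field_simp
      ring
  · have := H i
    rw [e, abs_mul, abs_of_pos hh] at this
    exact le_of_mul_le_mul_right (by linarith) hh
  · show |x i - (c i + off r (σ+1) j i)| ≤ hw r (σ+1) i
    rw [e, abs_mul, abs_of_pos hh]
    nlinarith [H i, abs_nonneg ((x i - c i)/(hw r (σ+1) i) - (2*(j i:ℝ) - r i - 1))]


lemma abs_sub_subcell {σ : ℕ} (c x : Fin n → ℝ) (j : Fin n → ℕ) (i : Fin n) :
    |x i - (c i + off r (σ+1) j i)|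
      = |(x i - c i)/(hw r (σ+1) i) - (2*(j i:ℝ) - r i - 1)| * hw r (σ+1) i := by
  have hh := hw_pos r hr3 (σ+1) i
  have e : x i - (c i + off r (σ+1) j i)
      = ((x i - c i)/(hw r (σ+1) i) - (2*(j i:ℝ) - r i - 1)) * hw r (σ+1) i := by
    rw [show off r (σ+1) j i = (2*(j i:ℝ) - r i - 1) * hw r (σ+1) i from rfl]
    have hq : hw r (σ+1) i ≠ 0 := ne_of_gt hh
    field_simp
    ring
  rw [e, abs_mul, abs_of_pos hh]

lemma bx_scale {σ : ℕ} {c x : Fin n → ℝ} :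
    x ∈ bx c (hw r σ) ↔ ∀ i, |(x i - c i)/(hw r (σ+1) i)| ≤ r i := by
  constructor <;> intro H i <;> have hh := hw_pos r hr3 (σ+1) i <;>
    have hm := hw_mul r hr3 σ i
  · rw [abs_div, abs_of_pos hh, div_le_iff₀ hh, ← hm]; exact H i
  · have := H i
    rw [abs_div, abs_of_pos hh, div_le_iff₀ hh, ← hm] at this; exact this

lemma ob_scale {σ : ℕ} {c x : Fin n → ℝ} :
    x ∈ ob c (hw r (σ+1)) ↔ ∀ i, |(x i - c i)/(hw r (σ+1) i)| < 1 := by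
  constructor <;> intro H i <;> have hh := hw_pos r hr3 (σ+1) i
  · rw [abs_div, abs_of_pos hh, div_lt_one hh]; exact H i
  · have := H i
    rw [abs_div, abs_of_pos hh, div_lt_one hh] at this; exact this

include hrodd hJdef

/-- D1 : a point of a cell not in the open central sub-box is in some admissible subcell -/
lemma escape {σ : ℕ} {c x : Fin n → ℝ} (hc : c ∈ centers r J σ)
    (hx : x ∈ bx c (hw r σ)) (hnot : x ∉ ob c (hw r (σ+1))) : x ∈ KK r J (σ+1) := by
  set h' := hw r (σ+1) with hh'
  have hv : ∀ i, |(x i - c i)/(h' i)| ≤ r i := (bx_scale r hr3).mp hx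
  have hex : ∃ i₀, 1 ≤ |(x i₀ - c i₀)/(h' i₀)| := by
    by_contra hcon
    push_neg at hcon
    exact hnot ((ob_scale r hr3).mpr (fun i => hcon i))
  obtain ⟨i₀, hi₀⟩ := hex
  have Hg : ∀ i, ∃ g : ℕ, 1 ≤ g ∧ g ≤ r i ∧
      |(x i - c i)/(h' i) - (2*(g:ℝ) - r i - 1)| ≤ 1 :=
    fun i => grid1 (r i) (hr3 i) _ (hv i)
  choose g hg1 hg2 hg3 using Hg
  obtain ⟨g₀, hg₀1, hg₀2, hg₀c, hg₀le⟩ :=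
    grid_noncentral (r i₀) (hr3 i₀) _ (hv i₀) hi₀
  classical
  set j : Fin n → ℕ := fun i => if i = i₀ then g₀ else g i with hj
  have hjJ : j ∈ J := by
    rw [hJdef]
    refine ⟨fun i => ?_, ?_⟩
    · by_cases h : i = i₀
      · subst h; simp only [hj, if_pos rfl]; exact ⟨hg₀1, hg₀2⟩
      · simp only [hj, if_neg h]; exact ⟨hg1 i, hg2 i⟩
    · intro hctr
      have : j i₀ = (r i₀ + 1)/2 := congrFun hctr i₀
      simp only [hj, if_pos rfl] at this
      rw [this] at hg₀c
      exact hg₀c (ctr_coef r hr3 hrodd i₀)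
  have hmem : x ∈ bx (fun i => c i + off r (σ+1) j i) (hw r (σ+1)) := by
    rw [mem_subcell_iff r hr3]
    intro i
    by_cases h : i = i₀
    · subst h; simp only [hj, if_pos rfl]; exact hg₀le
    · simp only [hj, if_neg h]; exact hg3 i
  simp only [KK, mem_iUnion, exists_prop]
  refine ⟨fun i => c i + off r (σ+1) j i, ?_, hmem⟩
  rw [centers_succ]
  simp only [mem_iUnion, exists_prop]
  exact ⟨c, hc, j, hjJ, rfl⟩


/-- D2 : a boundary point of a cell is a boundary point of some admissible subcell -/
lemma bdry_step {σ : ℕ} {c x : Fin n → ℝ} (hc : c ∈ centers r J σ)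
    (hx : x ∈ bx c (hw r σ)) {i₀ : Fin n} (he : |x i₀ - c i₀| = hw r σ i₀) :
    ∃ c' ∈ centers r J (σ+1), x ∈ bx c' (hw r (σ+1)) ∧ ∃ i, |x i - c' i| = hw r (σ+1) i := by
  have hv : ∀ i, |(x i - c i)/(hw r (σ+1) i)| ≤ r i := (bx_scale r hr3).mp hx
  have hh₀ := hw_pos r hr3 (σ+1) i₀
  have hr3' : (3:ℝ) ≤ r i₀ := by exact_mod_cast hr3 i₀
  have hveq : |(x i₀ - c i₀)/(hw r (σ+1) i₀)| = r i₀ := by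
    rw [abs_div, abs_of_pos hh₀, he, hw_mul r hr3 σ i₀, mul_div_assoc,
      div_self (ne_of_gt hh₀), mul_one]
  obtain ⟨g₀, hg₀1, hg₀2, hg₀c, hg₀eq⟩ : ∃ g₀ : ℕ, 1 ≤ g₀ ∧ g₀ ≤ r i₀ ∧
      (2*(g₀:ℝ) - r i₀ - 1 ≠ 0) ∧
      |(x i₀ - c i₀)/(hw r (σ+1) i₀) - (2*(g₀:ℝ) - r i₀ - 1)| = 1 := by
    rcases (abs_eq (by positivity : (0:ℝ) ≤ r i₀)).mp hveq with hpos | hneg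
    · refine ⟨r i₀, by have := hr3 i₀; omega, le_refl _, by intro h; linarith, ?_⟩
      rw [hpos, show ((r i₀:ℝ) - (2*(r i₀:ℝ) - r i₀ - 1)) = 1 by ring]
      simp
    · refine ⟨1, le_refl _, by have := hr3 i₀; omega, by push_cast; intro h; linarith, ?_⟩
      rw [hneg, show ((-(r i₀:ℝ)) - (2*((1:ℕ):ℝ) - r i₀ - 1)) = -1 by push_cast; ring]
      simp
  have Hg : ∀ i, ∃ g : ℕ, 1 ≤ g ∧ g ≤ r i ∧
      |(x i - c i)/(hw r (σ+1) i) - (2*(g:ℝ) - r i - 1)| ≤ 1 :=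
    fun i => grid1 (r i) (hr3 i) _ (hv i)
  choose g hg1 hg2 hg3 using Hg
  classical
  set j : Fin n → ℕ := fun i => if i = i₀ then g₀ else g i with hj
  have hjJ : j ∈ J := by
    rw [hJdef]
    refine ⟨fun i => ?_, ?_⟩
    · by_cases h : i = i₀
      · subst h; simp only [hj, if_pos rfl]; exact ⟨hg₀1, hg₀2⟩
      · simp only [hj, if_neg h]; exact ⟨hg1 i, hg2 i⟩
    · intro hctr
      have : j i₀ = (r i₀ + 1)/2 := congrFun hctr i₀
      simp only [hj, if_pos rfl] at this
      rw [this] at hg₀c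
      exact hg₀c (ctr_coef r hr3 hrodd i₀)
  refine ⟨fun i => c i + off r (σ+1) j i, ?_, ?_, ⟨i₀, ?_⟩⟩
  · rw [centers_succ]
    simp only [mem_iUnion, exists_prop]
    exact ⟨c, hc, j, hjJ, rfl⟩
  · rw [mem_subcell_iff r hr3]
    intro i
    by_cases h : i = i₀
    · subst h; simp only [hj, if_pos rfl]; exact le_of_eq hg₀eq
    · simp only [hj, if_neg h]; exact hg3 i
  · rw [abs_sub_subcell r hr3]
    simp only [hj, if_pos rfl]
    rw [hg₀eq, one_mul]

/-- D3 : a boundary point of the central sub-box of a cell is a boundary point of an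
admissible subcell -/
lemma gap_bdry_step {σ : ℕ} {c x : Fin n → ℝ} (hc : c ∈ centers r J σ)
    (hx : x ∈ bx c (hw r (σ+1))) {i₀ : Fin n} (he : |x i₀ - c i₀| = hw r (σ+1) i₀) :
    ∃ c' ∈ centers r J (σ+1), x ∈ bx c' (hw r (σ+1)) ∧ ∃ i, |x i - c' i| = hw r (σ+1) i := by
  have hh₀ := hw_pos r hr3 (σ+1) i₀
  have hv : ∀ i, |(x i - c i)/(hw r (σ+1) i)| ≤ 1 := by
    intro i
    have hh := hw_pos r hr3 (σ+1) i
    rw [abs_div, abs_of_pos hh, div_le_one hh]; exact hx i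
  have hveq : |(x i₀ - c i₀)/(hw r (σ+1) i₀)| = 1 := by
    rw [abs_div, abs_of_pos hh₀, he, div_self (ne_of_gt hh₀)]
  obtain ⟨g₀, hg₀1, hg₀2, hg₀c, hg₀eq⟩ : ∃ g₀ : ℕ, 1 ≤ g₀ ∧ g₀ ≤ r i₀ ∧
      g₀ ≠ (r i₀ + 1)/2 ∧
      |(x i₀ - c i₀)/(hw r (σ+1) i₀) - (2*(g₀:ℝ) - r i₀ - 1)| = 1 := by
    obtain ⟨k, hk⟩ := hrodd i₀
    have hk1 : 1 ≤ k := by have := hr3 i₀; omega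
    rcases (abs_eq (by norm_num : (0:ℝ) ≤ 1)).mp hveq with hpos | hneg
    · refine ⟨k + 2, by omega, by omega, by omega, ?_⟩
      have : (2*((k+2:ℕ):ℝ) - r i₀ - 1) = 2 := by rw [hk]; push_cast; ring
      rw [hpos, this, show (1:ℝ) - 2 = -1 by ring]
      simp
    · refine ⟨k, by omega, by omega, by omega, ?_⟩
      have : (2*((k:ℕ):ℝ) - r i₀ - 1) = -2 := by rw [hk]; push_cast; ring
      rw [hneg, this, show (-1:ℝ) - (-2) = 1 by ring]
      simp
  classical
  set j : Fin n → ℕ := fun i => if i = i₀ then g₀ else (r i + 1)/2 with hj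
  have hjJ : j ∈ J := by
    rw [hJdef]
    refine ⟨fun i => ?_, ?_⟩
    · by_cases h : i = i₀
      · subst h; simp only [hj, if_pos rfl]; exact ⟨hg₀1, hg₀2⟩
      · simp only [hj, if_neg h]
        have := hr3 i; omega
    · intro hctr
      have : j i₀ = (r i₀ + 1)/2 := congrFun hctr i₀
      simp only [hj, if_pos rfl] at this
      exact hg₀c this
  refine ⟨fun i => c i + off r (σ+1) j i, ?_, ?_, ⟨i₀, ?_⟩⟩
  · rw [centers_succ]
    simp only [mem_iUnion, exists_prop]
    exact ⟨c, hc, j, hjJ, rfl⟩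
  · rw [mem_subcell_iff r hr3]
    intro i
    by_cases h : i = i₀
    · subst h; simp only [hj, if_pos rfl]; exact le_of_eq hg₀eq
    · simp only [hj, if_neg h]
      rw [ctr_coef r hr3 hrodd i, sub_zero]
      exact hv i
  · rw [abs_sub_subcell r hr3]
    simp only [hj, if_pos rfl]
    rw [hg₀eq, one_mul]

lemma bdry_iter (d : ℕ) : ∀ (σ : ℕ) (c x : Fin n → ℝ), c ∈ centers r J σ →
    x ∈ bx c (hw r σ) → (∃ i, |x i - c i| = hw r σ i) →
    ∃ c' ∈ centers r J (σ+d), x ∈ bx c' (hw r (σ+d)) ∧ ∃ i, |x i - c' i| = hw r (σ+d) i := by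
  induction d with
  | zero => intro σ c x hc hx he; exact ⟨c, hc, hx, he⟩
  | succ d ih =>
    intro σ c x hc hx he
    obtain ⟨i₀, he₀⟩ := he
    obtain ⟨c', hc', hx', he'⟩ := bdry_step r J hr3 hrodd hJdef hc hx he₀
    have hrw : σ + (d+1) = (σ+1) + d := by omega
    rw [hrw]
    exact ih (σ+1) c' x hc' hx' he'

omit hr3 hrodd hJdef in
lemma cell_subset_KK {σ : ℕ} {c : Fin n → ℝ} (hc : c ∈ centers r J σ) :
    bx c (hw r σ) ⊆ KK r J σ := by
  intro x hx
  simp only [KK, mem_iUnion, exists_prop]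
  exact ⟨c, hc, hx⟩

lemma bdry_mem_KK {σ : ℕ} {c x : Fin n → ℝ} (hc : c ∈ centers r J σ)
    (hx : x ∈ bx c (hw r σ)) (he : ∃ i, |x i - c i| = hw r σ i) (m : ℕ) :
    x ∈ KK r J m := by
  have hJ1 : ∀ j ∈ J, ∀ i, 1 ≤ j i ∧ j i ≤ r i := fun j hj => ((hJdef j).mp hj).1
  rcases le_or_gt m σ with h | h
  · exact KK_anti r J hr3 hJ1 h (cell_subset_KK r J hc hx)
  · obtain ⟨c', hc', hx', _⟩ := bdry_iter r J hr3 hrodd hJdef (m - σ) σ c x hc hx he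
    have : σ + (m - σ) = m := by omega
    rw [this] at hc' hx'
    exact cell_subset_KK r J hc' hx'

lemma gap_bdry_mem_KK {σ : ℕ} {c x : Fin n → ℝ} (hc : c ∈ centers r J σ)
    (hx : x ∈ bx c (hw r (σ+1))) (he : ∃ i, |x i - c i| = hw r (σ+1) i) (m : ℕ) :
    x ∈ KK r J m := by
  obtain ⟨i₀, he₀⟩ := he
  obtain ⟨c', hc', hx', he'⟩ := gap_bdry_step r J hr3 hrodd hJdef hc hx he₀
  exact bdry_mem_KK r J hr3 hrodd hJdef hc' hx' he' m

lemma ob_inter_KK {σ : ℕ} {c : Fin n → ℝ} (hc : c ∈ centers r J σ) :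
    ob c (hw r (σ+1)) ∩ KK r J (σ+1) = ∅ := by
  have hJ1 : ∀ j ∈ J, ∀ i, 1 ≤ j i ∧ j i ≤ r i := fun j hj => ((hJdef j).mp hj).1
  ext x
  simp only [mem_inter_iff, mem_empty_iff_false, iff_false, not_and]
  intro hob hK
  simp only [KK, centers_succ, mem_iUnion, exists_prop] at hK
  obtain ⟨c', hc', hxc'⟩ := hK
  obtain ⟨c₀, hc₀, j, hjJ, rfl⟩ := hc'
  rcases centers_sep r J hr3 hJ1 σ c hc c₀ hc₀ with hcc | ⟨i, hsep⟩
  · -- same cell : j must be the centre, contradiction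
    subst hcc
    have hctr : j = fun i => (r i + 1)/2 := by
      funext i
      obtain ⟨k, hk⟩ := hrodd i
      have hh := hw_pos r hr3 (σ+1) i
      have h1 : |(x i - c i)/(hw r (σ+1) i)| < 1 := by
        rw [abs_div, abs_of_pos hh, div_lt_one hh]; exact hob i
      have h2 : |(x i - c i)/(hw r (σ+1) i) - (2*(j i:ℝ) - r i - 1)| ≤ 1 :=
        (mem_subcell_iff r hr3).mp hxc' i
      have habs : |2*(j i:ℝ) - r i - 1| < 2 := by
        calc |2*(j i:ℝ) - r i - 1|
            = |(x i - c i)/(hw r (σ+1) i)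
              - ((x i - c i)/(hw r (σ+1) i) - (2*(j i:ℝ) - r i - 1))| := by ring_nf
          _ ≤ |(x i - c i)/(hw r (σ+1) i)|
              + |(x i - c i)/(hw r (σ+1) i) - (2*(j i:ℝ) - r i - 1)| := abs_sub _ _
          _ < 2 := by linarith
      rw [abs_lt] at habs
      have hlt1 : (-2:ℤ) < 2*(j i:ℤ) - r i - 1 := by exact_mod_cast habs.1
      have hlt2 : (2*(j i:ℤ) - r i - 1 : ℤ) < 2 := by exact_mod_cast habs.2
      omega
    rw [hJdef] at hjJ
    exact hjJ.2 hctr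
  · have hx₀ : x ∈ bx c₀ (hw r σ) := subcell_subset r hr3 (hJ1 j hjJ) hxc'
    have h1 : |x i - c i| < hw r (σ+1) i := hob i
    have h2 : |x i - c₀ i| ≤ hw r σ i := hx₀ i
    have h3 : hw r (σ+1) i < hw r σ i := hw_succ_lt r hr3 σ i
    have : |c i - c₀ i| < 2 * hw r σ i := by
      calc |c i - c₀ i| = |(c i - x i) + (x i - c₀ i)| := by ring_nf
        _ ≤ |c i - x i| + |x i - c₀ i| := abs_add_le _ _
        _ = |x i - c i| + |x i - c₀ i| := by rw [abs_sub_comm]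
        _ < 2 * hw r σ i := by linarith
    linarith

lemma notKK_mem_ob {σ : ℕ} {x : Fin n → ℝ} (hx : x ∈ KK r J σ) (hnx : x ∉ KK r J (σ+1)) :
    ∃ c ∈ centers r J σ, x ∈ ob c (hw r (σ+1)) := by
  simp only [KK, mem_iUnion, exists_prop] at hx
  obtain ⟨c, hc, hxc⟩ := hx
  by_cases h : x ∈ ob c (hw r (σ+1))
  · exact ⟨c, hc, h⟩
  · exact absurd (escape r J hr3 hrodd hJdef hc hxc h) hnx

end descend


section attractor
variable (hr3 : ∀ i, 3 ≤ r i) (hrodd : ∀ i, Odd (r i))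
variable (hJdef : ∀ j, j ∈ J ↔ ((∀ i, 1 ≤ j i ∧ j i ≤ r i) ∧ j ≠ fun i => (r i + 1) / 2))
variable (f : (Fin n → ℕ) → (Fin n → ℝ) → (Fin n → ℝ))
variable (hf : ∀ j x, f j x = fun i => (x i + 2 * (j i : ℝ) - (r i : ℝ) - 1) / (r i : ℝ))

include hr3 hrodd hJdef hf

lemma J_finite : J.Finite := by
  classical
  apply Set.Finite.subset (Set.finite_Icc (fun _ : Fin n => 1) r)
  intro j hj
  rw [Set.mem_Icc]
  constructor <;> intro i
  · exact (((hJdef j).mp hj).1 i).1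
  · exact (((hJdef j).mp hj).1 i).2

lemma centers_finite (σ : ℕ) : (centers r J σ).Finite := by
  induction σ with
  | zero => simp [centers_zero]
  | succ σ ih =>
    rw [centers_succ]
    exact Set.Finite.biUnion ih (fun c _ =>
      Set.Finite.biUnion (J_finite r J hr3 hrodd hJdef f hf) (fun j _ => Set.finite_singleton _))

omit hr3 hrodd hJdef f hf in
lemma bx_closed (c ρ : Fin n → ℝ) : IsClosed (bx c ρ) := by
  have : bx c ρ = ⋂ i, {x : Fin n → ℝ | |x i - c i| ≤ ρ i} := by
    ext x; simp [bx, mem_iInter]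
  rw [this]
  refine isClosed_iInter (fun i => ?_)
  have hcont : Continuous fun x : Fin n → ℝ => |x i - c i| :=
    ((continuous_apply i).sub continuous_const).abs
  exact isClosed_le hcont continuous_const

lemma KK_closed (σ : ℕ) : IsClosed (KK r J σ) :=
  Set.Finite.isClosed_biUnion (centers_finite r J hr3 hrodd hJdef f hf σ) (fun c _ => bx_closed c _)

omit hr3 hrodd hJdef f hf in
lemma bx_zero_eq_closedBall : bx (0 : Fin n → ℝ) (hw r 0) = closedBall 0 1 := by
  ext x
  simp only [bx, mem_setOf_eq, hw, pow_zero, mem_closedBall, dist_zero_right]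
  rw [pi_norm_le_iff_of_nonneg (by norm_num : (0:ℝ) ≤ 1)]
  constructor <;> intro h i
  · simpa [Real.norm_eq_abs] using h i
  · simpa [Real.norm_eq_abs] using h i

omit hr3 hrodd hJdef f hf in
lemma KK_zero : KK r J 0 = closedBall 0 1 := by
  rw [KK, centers_zero]
  simp only [mem_singleton_iff, iUnion_iUnion_eq_left]
  exact bx_zero_eq_closedBall r

omit hrodd hJdef in
lemma f_inj (j : Fin n → ℕ) : Function.Injective (f j) := by
  intro x y hxy
  funext i
  have h0 := hr0 r hr3 i
  have h1 : (x i + 2 * (j i : ℝ) - (r i : ℝ) - 1) / (r i : ℝ)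
      = (y i + 2 * (j i : ℝ) - (r i : ℝ) - 1) / (r i : ℝ) := by
    have := congrFun hxy i
    rwa [hf, hf] at this
  have h2 : (r i : ℝ) ≠ 0 := ne_of_gt h0
  field_simp at h1
  linarith

omit hrodd hJdef in
lemma f_im_bx (j : Fin n → ℕ) (c ρ : Fin n → ℝ) :
    f j '' bx c ρ = bx (f j c) (fun i => ρ i * ((r i:ℝ))⁻¹) := by
  ext y
  constructor
  · rintro ⟨x, hx, rfl⟩
    intro i
    have h0 := hr0 r hr3 i
    show |f j x i - f j c i| ≤ ρ i * ((r i:ℝ))⁻¹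
    rw [hf, hf]
    rw [show (x i + 2*(j i:ℝ) - r i - 1) / r i - (c i + 2*(j i:ℝ) - r i - 1) / r i
        = (x i - c i) * (r i:ℝ)⁻¹ by field_simp <;> ring]
    rw [abs_mul, abs_of_pos (by positivity : (0:ℝ) < (r i:ℝ)⁻¹)]
    exact mul_le_mul_of_nonneg_right (hx i) (by positivity)
  · intro hy
    refine ⟨fun i => y i * r i - (2*(j i:ℝ) - r i - 1), ?_, ?_⟩
    · intro i
      have h0 := hr0 r hr3 i
      have : |y i - (c i + 2*(j i:ℝ) - r i - 1) / (r i:ℝ)| ≤ ρ i * ((r i:ℝ))⁻¹ := by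
        have h := hy i
        rw [hf] at h
        exact h
      rw [show y i * (r i:ℝ) - (2*(j i:ℝ) - r i - 1) - c i
          = (y i - (c i + 2*(j i:ℝ) - r i - 1) / r i) * r i by field_simp <;> ring]
      rw [abs_mul, abs_of_pos h0]
      calc |y i - (c i + 2*(j i:ℝ) - r i - 1) / r i| * (r i:ℝ)
          ≤ ρ i * (r i:ℝ)⁻¹ * r i := mul_le_mul_of_nonneg_right this (le_of_lt h0)
        _ = ρ i := by field_simp
    · rw [hf]
      funext i
      have h0 := hr0 r hr3 i
      show (y i * (r i:ℝ) - (2*(j i:ℝ) - r i - 1) + 2*(j i:ℝ) - r i - 1) / (r i:ℝ) = y i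
      field_simp
      ring

omit hrodd in
lemma centers_succ_eq (σ : ℕ) :
    centers r J (σ+1) = ⋃ j ∈ J, f j '' centers r J σ := by
  induction σ with
  | zero =>
    rw [centers_succ, centers_zero]
    simp only [mem_singleton_iff, iUnion_iUnion_eq_left, image_singleton]
    apply iUnion_congr; intro j; apply iUnion_congr; intro hj
    rw [Set.singleton_eq_singleton_iff]
    funext i
    have h0 := hr0 r hr3 i
    rw [hf]
    simp only [off, Pi.zero_apply, pow_one]
    field_simp
    simp only [zero_add, pow_one, one_div]
    rw [mul_comm, mul_assoc, inv_mul_cancel₀ (ne_of_gt h0), mul_one]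
  | succ σ ih =>
    ext y
    constructor
    · intro hy
      rw [centers_succ] at hy
      simp only [mem_iUnion, exists_prop, mem_singleton_iff] at hy
      obtain ⟨c, hc, j', hj', rfl⟩ := hy
      rw [ih] at hc
      simp only [mem_iUnion, exists_prop, mem_image] at hc
      obtain ⟨j, hj, c₀, hc₀, rfl⟩ := hc
      simp only [mem_iUnion, exists_prop, mem_image]
      refine ⟨j, hj, (fun i => c₀ i + off r (σ+1) j' i), ?_, ?_⟩
      · rw [centers_succ]
        simp only [mem_iUnion, exists_prop, mem_singleton_iff]
        exact ⟨c₀, hc₀, j', hj', rfl⟩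
      · funext i
        have h0 := hr0 r hr3 i
        have h0' : (r i : ℝ) ≠ 0 := ne_of_gt h0
        rw [hf, hf]
        simp only [off]
        simp only [div_eq_mul_inv]
        ring
    · intro hy
      simp only [mem_iUnion, exists_prop, mem_image] at hy
      obtain ⟨j, hj, c, hc, rfl⟩ := hy
      rw [centers_succ] at hc
      simp only [mem_iUnion, exists_prop, mem_singleton_iff] at hc
      obtain ⟨c₀, hc₀, j', hj', rfl⟩ := hc
      rw [centers_succ]
      simp only [mem_iUnion, exists_prop, mem_singleton_iff]
      refine ⟨f j c₀, ?_, j', hj', ?_⟩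
      · rw [ih]
        simp only [mem_iUnion, exists_prop, mem_image]
        exact ⟨j, hj, c₀, hc₀, rfl⟩
      · funext i
        have h0 := hr0 r hr3 i
        have h0' : (r i : ℝ) ≠ 0 := ne_of_gt h0
        rw [hf, hf]
        simp only [off]
        simp only [div_eq_mul_inv]
        ring

omit hrodd in
lemma KK_succ_eq (σ : ℕ) : KK r J (σ+1) = ⋃ j ∈ J, f j '' KK r J σ := by
  rw [KK, centers_succ_eq r J hr3 hJdef f hf]
  ext y
  simp only [mem_iUnion, exists_prop, mem_image, KK]
  constructor
  · rintro ⟨c, ⟨j, hj, c₀, hc₀, rfl⟩, hy⟩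
    have : y ∈ bx (f j c₀) (fun i => hw r σ i * ((r i:ℝ))⁻¹) := by
      have : (fun i => hw r σ i * ((r i:ℝ))⁻¹) = hw r (σ+1) := by
        funext i; rw [← hw_succ r hr3]
      rw [this]; exact hy
    rw [← f_im_bx r hr3 f hf] at this
    obtain ⟨x, hx, rfl⟩ := this
    exact ⟨j, hj, x, by first | (simp only [mem_iUnion, exists_prop]; exact ⟨c₀, hc₀, hx⟩) | exact ⟨c₀, hc₀, hx⟩, rfl⟩
  · rintro ⟨j, hj, x, hx, rfl⟩
    obtain ⟨c₀, hc₀, hx⟩ := hx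
    refine ⟨f j c₀, ⟨j, hj, c₀, hc₀, rfl⟩, ?_⟩
    have := (f_im_bx r hr3 f hf j c₀ (hw r σ)) ▸ mem_image_of_mem (f j) hx
    have h2 : (fun i => hw r σ i * ((r i:ℝ))⁻¹) = hw r (σ+1) := by
      funext i; rw [← hw_succ r hr3]
    rw [← h2]
    exact this

variable (C : Set (Fin n → ℝ))

lemma C_subset_KK (hCsub : C ⊆ closedBall 0 1) (hCattr : C = ⋃ j ∈ J, f j '' C) :
    ∀ σ, C ⊆ KK r J σ := by
  intro σ
  induction σ with
  | zero => rw [KK_zero r J]; exact hCsub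
  | succ σ ih =>
    rw [KK_succ_eq r J hr3 hJdef f hf σ]
    intro x hx
    rw [hCattr] at hx
    simp only [mem_iUnion, exists_prop, mem_image] at hx ⊢
    obtain ⟨j, hj, y, hy, rfl⟩ := hx
    exact ⟨j, hj, y, ih hy, rfl⟩

lemma C_eq_iInter (hCne : C.Nonempty) (hCsub : C ⊆ closedBall 0 1)
    (hCattr : C = ⋃ j ∈ J, f j '' C)
    (hCuniq : ∀ K : Set (Fin n → ℝ), IsCompact K → K.Nonempty →
      K = ⋃ j ∈ J, f j '' K → K = C) :
    C = ⋂ σ, KK r J σ := by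
  set KI := ⋂ σ, KK r J σ with hKI
  have hsub : C ⊆ KI := by
    rw [hKI]; exact subset_iInter (C_subset_KK r J hr3 hrodd hJdef f hf C hCsub hCattr)
  have hKIne : KI.Nonempty := hCne.mono hsub
  have hKIclosed : IsClosed KI := isClosed_iInter (fun σ => KK_closed r J hr3 hrodd hJdef f hf σ)
  have hKIsub : KI ⊆ closedBall 0 1 := by
    rw [← KK_zero r J]
    exact iInter_subset _ 0
  have hKIcompact : IsCompact KI :=
    (isCompact_closedBall (0 : Fin n → ℝ) 1).of_isClosed_subset hKIclosed hKIsub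
  have hJ1 : ∀ j ∈ J, ∀ i, 1 ≤ j i ∧ j i ≤ r i := fun j hj => ((hJdef j).mp hj).1
  have heq : KI = ⋃ j ∈ J, f j '' KI := by
    apply Subset.antisymm
    · intro y hy
      -- choose for each σ a j with y ∈ f j '' KK σ
      have hy' : ∀ σ, ∃ j : ↥J, y ∈ f j '' KK r J σ := by
        intro σ
        have : y ∈ KK r J (σ+1) := by
          rw [hKI] at hy
          exact mem_iInter.mp hy (σ+1)
        rw [KK_succ_eq r J hr3 hJdef f hf σ] at this
        simp only [mem_iUnion, exists_prop] at this
        obtain ⟨j, hj, hyj⟩ := this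
        exact ⟨⟨j, hj⟩, hyj⟩
      choose jf hjf using hy'
      have : Finite ↥J := (J_finite r J hr3 hrodd hJdef f hf).to_subtype
      obtain ⟨j₀, hfib⟩ := Finite.exists_infinite_fiber jf
      have hfib' : (jf ⁻¹' {j₀} : Set ℕ).Infinite := Set.infinite_coe_iff.mp hfib
      have hall : ∀ σ, y ∈ f j₀ '' KK r J σ := by
        intro σ
        obtain ⟨σ', hσ'mem, hσ'gt⟩ := hfib'.exists_gt σ
        have : y ∈ f (jf σ') '' KK r J σ' := hjf σ'
        rw [show jf σ' = j₀ from hσ'mem] at this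
        exact (Set.image_mono (KK_anti r J hr3 hJ1 (le_of_lt hσ'gt))) this
      -- all preimages coincide by injectivity
      obtain ⟨x₀, hx₀, hfx₀⟩ := hall 0
      have hx₀all : ∀ σ, x₀ ∈ KK r J σ := by
        intro σ
        obtain ⟨x, hx, hfx⟩ := hall σ
        have : x = x₀ := f_inj r hr3 f hf j₀ (by rw [hfx, hfx₀])
        rwa [← this]
      simp only [mem_iUnion, exists_prop]
      exact ⟨j₀, j₀.2, x₀, by rw [hKI]; exact mem_iInter.mpr hx₀all, hfx₀⟩
    · intro y hy
      simp only [mem_iUnion, exists_prop] at hy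
      obtain ⟨j, hj, x, hx, rfl⟩ := hy
      rw [hKI]
      apply mem_iInter.mpr
      intro σ
      have h1 : f j x ∈ KK r J (σ+1) := by
        rw [KK_succ_eq r J hr3 hJdef f hf σ]
        simp only [mem_iUnion, exists_prop]
        exact ⟨j, hj, x, by rw [hKI] at hx; exact mem_iInter.mp hx σ, rfl⟩
      exact KK_anti r J hr3 hJ1 (Nat.le_succ σ) h1
  exact (hCuniq KI hKIcompact hKIne heq).symm

end attractor

section gapsec
variable (hr3 : ∀ i, 3 ≤ r i) (hrodd : ∀ i, Odd (r i))
variable (hJdef : ∀ j, j ∈ J ↔ ((∀ i, 1 ≤ j i ∧ j i ≤ r i) ∧ j ≠ fun i => (r i + 1) / 2))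
variable (C : Set (Fin n → ℝ))

lemma ob_open (c ρ : Fin n → ℝ) : IsOpen (ob c ρ) := by
  have : ob c ρ = ⋂ i, {x : Fin n → ℝ | |x i - c i| < ρ i} := by
    ext x; simp [ob, mem_iInter]
  rw [this]
  refine isOpen_iInter_of_finite (fun i => ?_)
  exact isOpen_lt (((continuous_apply i).sub continuous_const).abs) continuous_const

lemma ob_convex (c ρ : Fin n → ℝ) : Convex ℝ (ob c ρ) := by
  have : ob c ρ = ⋂ i, (LinearMap.proj i : (Fin n → ℝ) →ₗ[ℝ] ℝ) ⁻¹' (ball (c i) (ρ i)) := by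
    ext x
    simp only [ob, mem_setOf_eq, mem_iInter, mem_preimage, mem_ball, Real.dist_eq,
      LinearMap.proj_apply]
  rw [this]
  exact convex_iInter (fun i => (convex_ball _ _).linear_preimage _)

lemma ob_preconnected (c ρ : Fin n → ℝ) : IsPreconnected (ob c ρ) :=
  (ob_convex c ρ).isPreconnected

lemma mem_ob_self {σ : ℕ} (c : Fin n → ℝ) (h3 : ∀ i, 3 ≤ r i) : c ∈ ob c (hw r (σ+1)) := by
  intro i
  simpa using hw_pos r h3 (σ+1) i

include hr3 hrodd hJdef

lemma ob_subset_compl (hCeq : C = ⋂ σ, KK r J σ) {σ : ℕ} {c : Fin n → ℝ}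
    (hc : c ∈ centers r J σ) : ob c (hw r (σ+1)) ⊆ Cᶜ := by
  intro x hx hxC
  have h1 : x ∈ KK r J (σ+1) := by
    rw [hCeq] at hxC; exact mem_iInter.mp hxC (σ+1)
  have := ob_inter_KK r J hr3 hrodd hJdef hc
  exact absurd (mem_inter hx h1) (by rw [this]; exact notMem_empty x)

lemma bxdiff_subset_C (hCeq : C = ⋂ σ, KK r J σ) {σ : ℕ} {c : Fin n → ℝ}
    (hc : c ∈ centers r J σ) : bx c (hw r (σ+1)) \ ob c (hw r (σ+1)) ⊆ C := by
  rintro x ⟨hx, hnx⟩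
  have : ∃ i, |x i - c i| = hw r (σ+1) i := by
    simp only [ob, mem_setOf_eq, not_forall, not_lt] at hnx
    obtain ⟨i, hi⟩ := hnx
    exact ⟨i, le_antisymm (hx i) hi⟩
  rw [hCeq]
  exact mem_iInter.mpr (gap_bdry_mem_KK r J hr3 hrodd hJdef hc hx this)

lemma ob_component (hCeq : C = ⋂ σ, KK r J σ) {σ : ℕ} {c x : Fin n → ℝ}
    (hc : c ∈ centers r J σ) (hx : x ∈ ob c (hw r (σ+1))) :
    connectedComponentIn Cᶜ x = ob c (hw r (σ+1)) := by
  apply Subset.antisymm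
  · have hTsub : connectedComponentIn Cᶜ x ⊆ Cᶜ := connectedComponentIn_subset _ _
    have hcover : Cᶜ ⊆ ob c (hw r (σ+1)) ∪ (bx c (hw r (σ+1)))ᶜ := by
      intro z hz
      by_cases hzb : z ∈ bx c (hw r (σ+1))
      · left
        by_contra hzo
        exact hz (bxdiff_subset_C r J hr3 hrodd hJdef C hCeq hc ⟨hzb, hzo⟩)
      · right; exact hzb
    have hdisj : Disjoint (ob c (hw r (σ+1))) ((bx c (hw r (σ+1)))ᶜ) := by
      rw [Set.disjoint_left]
      intro a ha hac
      exact hac (fun i => le_of_lt (ha i))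
    rcases IsPreconnected.subset_or_subset (ob_open c _) (bx_closed c _).isOpen_compl hdisj
      (hTsub.trans hcover) (isPreconnected_connectedComponentIn) with h | h
    · exact h
    · exfalso
      have hxT : x ∈ connectedComponentIn Cᶜ x :=
        mem_connectedComponentIn (ob_subset_compl r J hr3 hrodd hJdef C hCeq hc hx)
      exact (h hxT) (fun i => le_of_lt (hx i))
  · exact IsPreconnected.subset_connectedComponentIn (ob_preconnected c _) hx
      (ob_subset_compl r J hr3 hrodd hJdef C hCeq hc)

lemma ob_subset_ball {σ : ℕ} {c : Fin n → ℝ} (hc : c ∈ centers r J σ) :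
    ob c (hw r (σ+1)) ⊆ closedBall 0 1 := by
  have hJ1 : ∀ j ∈ J, ∀ i, 1 ≤ j i ∧ j i ≤ r i := fun j hj => ((hJdef j).mp hj).1
  intro x hx
  have h1 : x ∈ bx c (hw r σ) :=
    fun i => le_of_lt (lt_of_lt_of_le (hx i) (le_of_lt (hw_succ_lt r hr3 σ i)))
  have h2 : x ∈ KK r J σ := cell_subset_KK r J hc h1
  have h3 := KK_anti r J hr3 hJ1 (Nat.zero_le σ) h2
  rw [KK_zero r J] at h3
  exact h3

lemma ob_isBoundedGap (hCeq : C = ⋂ σ, KK r J σ) {σ : ℕ} {c : Fin n → ℝ}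
    (hc : c ∈ centers r J σ) : IsBoundedGap C (ob c (hw r (σ+1))) := by
  have hcmem : c ∈ ob c (hw r (σ+1)) := mem_ob_self r c hr3
  refine ⟨⟨c, ob_subset_compl r J hr3 hrodd hJdef C hCeq hc hcmem, ?_⟩, ?_⟩
  · exact (ob_component r J hr3 hrodd hJdef C hCeq hc hcmem).symm
  · exact (isBounded_closedBall).subset (ob_subset_ball r J hr3 hrodd hJdef hc)

omit hr3 hrodd hJdef in
lemma outside_unbounded (hCsub : C ⊆ closedBall 0 1) {x : Fin n → ℝ} {i : Fin n}
    (hx : 1 < |x i|) : x ∈ unboundedGap C := by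
  have hnotC : ∀ y : Fin n → ℝ, 1 < |y i| → y ∈ Cᶜ := by
    intro y hy hyC
    have := hCsub hyC
    rw [mem_closedBall, dist_zero_right] at this
    have h2 : |y i| ≤ ‖y‖ := by
      have := norm_le_pi_norm y i
      simpa [Real.norm_eq_abs] using this
    linarith
  set g : ℝ → (Fin n → ℝ) := fun s => Function.update x i (x i * (1+s)) with hg
  have hgmem : ∀ s ∈ Ici (0:ℝ), 1 < |g s i| := by
    intro s hs
    simp only [hg, Function.update_self]
    rw [abs_mul]
    have h1 : (1:ℝ) ≤ |1 + s| := by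
      rw [mem_Ici] at hs
      rw [abs_of_pos (by linarith)]; linarith
    nlinarith
  have hgcont : Continuous g := by
    apply continuous_pi
    intro k
    by_cases hk : k = i
    · subst hk
      simp only [hg]
      have : (fun s : ℝ => Function.update x k (x k * (1+s)) k) = fun s => x k * (1+s) := by
        funext s; simp
      rw [this]
      fun_prop
    · simp only [hg]
      have : (fun s : ℝ => Function.update x i (x i * (1+s)) k) = fun _ => x k := by
        funext s; simp [Function.update_of_ne hk]
      rw [this]
      exact continuous_const
  have hS : IsPreconnected (g '' Ici 0) :=
    (isPreconnected_Ici).image g hgcont.continuousOn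
  have hSsub : g '' Ici 0 ⊆ Cᶜ := by
    rintro y ⟨s, hs, rfl⟩
    exact hnotC _ (hgmem s hs)
  have hx0 : g 0 = x := by
    simp only [hg]
    funext k
    by_cases hk : k = i
    · subst hk; simp
    · simp [Function.update_of_ne hk]
  have hxS : x ∈ g '' Ici 0 := ⟨0, by simp, hx0⟩
  have hcomp : g '' Ici 0 ⊆ connectedComponentIn Cᶜ x :=
    IsPreconnected.subset_connectedComponentIn hS hxS hSsub
  refine ⟨hnotC x hx, ?_⟩
  intro hb
  obtain ⟨R, hR⟩ := (isBounded_iff_forall_norm_le).mp (hb.subset hcomp)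
  have hmem : g (|R|+1) ∈ g '' Ici 0 := ⟨_, by simp [mem_Ici]; positivity, rfl⟩
  have := hR _ hmem
  have h2 : |g (|R|+1) i| ≤ ‖g (|R|+1)‖ := by
    have := norm_le_pi_norm (g (|R|+1)) i
    simpa [Real.norm_eq_abs] using this
  have h3 : 1 + |R| < |g (|R|+1) i| := by
    simp only [hg, Function.update_self, abs_mul]
    have h4 : |1 + (|R|+1)| = 2 + |R| := by rw [abs_of_pos (by positivity)]; ring
    rw [h4]
    nlinarith [abs_nonneg R]
  have h5 : R ≤ |R| := le_abs_self R
  linarith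

lemma mem_ob_of_ball_diff_C (hCeq : C = ⋂ σ, KK r J σ) {y : Fin n → ℝ}
    (hy : y ∈ closedBall 0 1) (hyC : y ∉ C) :
    ∃ σ, ∃ c ∈ centers r J σ, y ∈ ob c (hw r (σ+1)) := by
  have hex : ∃ σ, y ∉ KK r J σ := by
    by_contra hcon
    push_neg at hcon
    exact hyC (by rw [hCeq]; exact mem_iInter.mpr hcon)
  classical
  set σ₀ := Nat.find hex with hσ₀
  have h1 : y ∉ KK r J σ₀ := Nat.find_spec hex
  have h2 : σ₀ ≠ 0 := by
    intro h
    rw [h] at h1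
    rw [KK_zero r J] at h1
    exact h1 hy
  obtain ⟨τ, hτ⟩ := Nat.exists_eq_succ_of_ne_zero h2
  have h3 : y ∈ KK r J τ := by
    by_contra hcon
    have := Nat.find_min hex (by omega : τ < σ₀)
    exact this hcon
  rw [hτ] at h1
  obtain ⟨c, hc, hob⟩ := notKK_mem_ob r J hr3 hrodd hJdef h3 h1
  exact ⟨τ, c, hc, hob⟩

lemma unboundedGap_inter_cell (hCeq : C = ⋂ σ, KK r J σ) {σ : ℕ} {c : Fin n → ℝ}
    (hc : c ∈ centers r J σ) : unboundedGap C ∩ bx c (hw r σ) = ∅ := by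
  have hJ1 : ∀ j ∈ J, ∀ i, 1 ≤ j i ∧ j i ≤ r i := fun j hj => ((hJdef j).mp hj).1
  ext y
  simp only [mem_inter_iff, mem_empty_iff_false, iff_false, not_and]
  intro hyu hyb
  obtain ⟨hyC, hyunb⟩ := hyu
  have hyball : y ∈ closedBall 0 1 := by
    have := KK_anti r J hr3 hJ1 (Nat.zero_le σ) (cell_subset_KK r J hc hyb)
    rwa [KK_zero r J] at this
  obtain ⟨τ, c', hc', hob⟩ := mem_ob_of_ball_diff_C r J hr3 hrodd hJdef C hCeq hyball hyC
  apply hyunb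
  rw [ob_component r J hr3 hrodd hJdef C hCeq hc' hob]
  exact (isBounded_closedBall).subset (ob_subset_ball r J hr3 hrodd hJdef hc')

lemma gap_eq_ob (hCeq : C = ⋂ σ, KK r J σ) (hCsub : C ⊆ closedBall 0 1)
    {G : Set (Fin n → ℝ)} (hG : IsBoundedGap C G) :
    ∃ σ, ∃ c ∈ centers r J σ, G = ob c (hw r (σ+1)) := by
  obtain ⟨⟨x, hxC, hGeq⟩, hGbd⟩ := hG
  by_cases hball : x ∈ closedBall 0 1
  · obtain ⟨σ, c, hc, hob⟩ := mem_ob_of_ball_diff_C r J hr3 hrodd hJdef C hCeq hball hxC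
    exact ⟨σ, c, hc, by rw [hGeq, ob_component r J hr3 hrodd hJdef C hCeq hc hob]⟩
  · exfalso
    rw [mem_closedBall, dist_zero_right] at hball
    push_neg at hball
    have : ∃ i, 1 < |x i| := by
      by_contra hcon
      push_neg at hcon
      have : ‖x‖ ≤ 1 := by
        rw [pi_norm_le_iff_of_nonneg (by norm_num : (0:ℝ) ≤ 1)]
        intro i; rw [Real.norm_eq_abs]; exact hcon i
      linarith
    obtain ⟨i, hi⟩ := this
    have := outside_unbounded C hCsub hi
    exact this.2 (hGeq ▸ hGbd)

end gapsec

section metricsec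
variable (hr3 : ∀ i, 3 ≤ r i) (hrodd : ∀ i, Odd (r i))
variable (hJdef : ∀ j, j ∈ J ↔ ((∀ i, 1 ≤ j i ∧ j i ≤ r i) ∧ j ≠ fun i => (r i + 1) / 2))
variable (C : Set (Fin n → ℝ)) (t : ℝ) (β : Fin n → ℝ)
variable (ht0 : 0 < t) (hβ : β = fun j => ((r j : ℝ)⁻¹) ^ t)

include hr3

omit hr3 in
include ht0 hβ in
lemma beta_rpow (i : Fin n) (hri : 3 ≤ r i) (s : ℝ) :
    β i ^ s = (r i : ℝ) ^ (-(t*s)) := by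
  have h0 : (0:ℝ) < r i := by positivity
  rw [hβ]
  simp only
  rw [Real.inv_rpow (le_of_lt h0), ← Real.rpow_neg (le_of_lt h0),
    ← Real.rpow_mul (le_of_lt h0)]
  ring_nf

lemma hw_rpow (σ : ℕ) (i : Fin n) : hw r σ i = (r i : ℝ) ^ (-(σ:ℝ)) := by
  have h0 := hr0 r hr3 i
  rw [hw, ← Real.rpow_natCast ((r i:ℝ))⁻¹ σ, Real.inv_rpow (le_of_lt h0),
    ← Real.rpow_neg (le_of_lt h0)]

include hrodd hJdef ht0 hβ

/-- the size of a level-(σ+1) central gap -/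
lemma sizeWrt_ob (hn : 0 < n) {σ : ℕ} {c : Fin n → ℝ} (hc : c ∈ centers r J σ) :
    sizeWrt β (ob c (hw r (σ+1))) = t / (σ+1) := by
  have hb1 : ∀ i, (1:ℝ) < r i := hr1 r hr3
  have hbound : ∀ i, 0 < hw r (σ+1) i := hw_pos r hr3 (σ+1)
  have hset : {t' | 0 < t' ∧ ∃ z, ob c (hw r (σ+1)) ⊆ affBox β (1/t') z}
      = Ici (t/(σ+1)) := by
    ext t'
    simp only [mem_setOf_eq, mem_Ici]
    constructor
    · rintro ⟨ht', z, hsub⟩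
      -- use two points near the faces in direction i₀
      set i₀ : Fin n := ⟨0, hn⟩
      have key : ∀ ε ∈ Ioo (0:ℝ) (hw r (σ+1) i₀), hw r (σ+1) i₀ - ε ≤ β i₀ ^ (1/t') := by
        intro ε hε
        set y₁ : Fin n → ℝ := Function.update c i₀ (c i₀ + (hw r (σ+1) i₀ - ε)) with hy₁
        set y₂ : Fin n → ℝ := Function.update c i₀ (c i₀ - (hw r (σ+1) i₀ - ε)) with hy₂
        have hy₁m : y₁ ∈ ob c (hw r (σ+1)) := by
          intro i
          by_cases h : i = i₀
          · subst h; simp only [hy₁, Function.update_self]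
            rw [show c i₀ + (hw r (σ+1) i₀ - ε) - c i₀ = hw r (σ+1) i₀ - ε by ring,
              abs_of_pos (by cases hε with | intro a b => linarith)]
            cases hε with | intro a b => linarith
          · simp only [hy₁, Function.update_of_ne h]
            simpa using hbound i
        have hy₂m : y₂ ∈ ob c (hw r (σ+1)) := by
          intro i
          by_cases h : i = i₀
          · subst h; simp only [hy₂, Function.update_self]
            rw [show c i₀ - (hw r (σ+1) i₀ - ε) - c i₀ = -(hw r (σ+1) i₀ - ε) by ring, abs_neg,
              abs_of_pos (by cases hε with | intro a b => linarith)]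
            cases hε with | intro a b => linarith
          · simp only [hy₂, Function.update_of_ne h]
            simpa using hbound i
        have h1 := hsub hy₁m i₀
        have h2 := hsub hy₂m i₀
        simp only [hy₁, hy₂, Function.update_self] at h1 h2
        have e1 : |c i₀ + (hw r (σ+1) i₀ - ε) - z i₀| ≥
            (c i₀ + (hw r (σ+1) i₀ - ε) - z i₀) := le_abs_self _
        have e2 : |c i₀ - (hw r (σ+1) i₀ - ε) - z i₀| ≥
            -(c i₀ - (hw r (σ+1) i₀ - ε) - z i₀) := neg_le_abs _
        linarith
      have hle : hw r (σ+1) i₀ ≤ β i₀ ^ (1/t') := by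
        by_contra hcon
        push_neg at hcon
        have hβpos : 0 < β i₀ ^ (1/t') := by
          rw [beta_rpow r t β ht0 hβ i₀ (hr3 i₀)]
          exact Real.rpow_pos_of_pos (hr0 r hr3 i₀) _
        set ε := (hw r (σ+1) i₀ - β i₀ ^ (1/t'))/2 with hε
        have hε1 : 0 < ε := by rw [hε]; linarith
        have hε2 : ε < hw r (σ+1) i₀ := by rw [hε]; linarith
        have := key ε ⟨hε1, hε2⟩
        rw [hε] at this; linarith
      rw [hw_rpow r hr3, beta_rpow r t β ht0 hβ i₀ (hr3 i₀),
        Real.rpow_le_rpow_left_iff (hb1 i₀)] at hle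
      -- -(σ+1) ≤ -(t * (1/t'))
      have h3 : t * (1/t') ≤ (σ+1:ℝ) := by push_cast at hle ⊢; linarith
      have h4 : t / t' ≤ (σ:ℝ)+1 := by rw [div_eq_mul_one_div]; exact h3
      rw [div_le_iff₀ (by positivity : (0:ℝ) < (σ:ℝ)+1)]
      rw [div_le_iff₀ ht'] at h4
      linarith
    · intro hge
      have ht' : 0 < t' := lt_of_lt_of_le (by positivity) hge
      refine ⟨ht', c, ?_⟩
      intro x hx i
      have h1 : |x i - c i| < hw r (σ+1) i := hx i
      have h2 : hw r (σ+1) i ≤ β i ^ (1/t') := by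
        rw [hw_rpow r hr3, beta_rpow r t β ht0 hβ i (hr3 i),
          Real.rpow_le_rpow_left_iff (hb1 i)]
        have : t * (1/t') ≤ (σ+1:ℝ) := by
          rw [mul_one_div, div_le_iff₀ ht']
          calc t = (t/(σ+1)) * ((σ:ℝ)+1) := by field_simp
            _ ≤ t' * ((σ:ℝ)+1) := by
                apply mul_le_mul_of_nonneg_right ?_ (by positivity)
                exact_mod_cast hge
            _ = ((σ:ℝ)+1) * t' := by ring
        push_cast
        linarith
      exact le_of_lt (lt_of_lt_of_le h1 h2)
  rw [sizeWrt, hset, csInf_Ici]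

end metricsec

section gdsec
variable (hr3 : ∀ i, 3 ≤ r i) (hrodd : ∀ i, Odd (r i))
variable (hJdef : ∀ j, j ∈ J ↔ ((∀ i, 1 ≤ j i ∧ j i ≤ r i) ∧ j ≠ fun i => (r i + 1) / 2))
variable (C : Set (Fin n → ℝ)) (t : ℝ) (β : Fin n → ℝ) (m : ℝ)
variable (ht0 : 0 < t) (hβ : β = fun j => ((r j : ℝ)⁻¹) ^ t)
variable (hm : IsLeast (Set.range fun i => Real.logb (r i) (((r i : ℝ) - 1) / 2)) m)

include hr3 hm

lemma m_nonneg : 0 ≤ m := by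
  obtain ⟨⟨i, hi⟩, _⟩ := hm
  rw [← hi]
  have hb := hr1 r hr3 i
  have h3 : (3:ℝ) ≤ r i := by exact_mod_cast hr3 i
  exact Real.logb_nonneg hb (by linarith)

lemma m_lt_one : m < 1 := by
  obtain ⟨⟨i, hi⟩, _⟩ := hm
  rw [← hi]
  have hb := hr1 r hr3 i
  have h3 : (3:ℝ) ≤ r i := by exact_mod_cast hr3 i
  calc Real.logb (r i) (((r i:ℝ) - 1)/2) < Real.logb (r i) (r i) := by
        apply Real.logb_lt_logb hb (by linarith)
        linarith
    _ = 1 := Real.logb_self_eq_one hb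

omit hm in
lemma rpow_logb_half (i : Fin n) :
    (r i:ℝ) ^ (Real.logb (r i) (((r i:ℝ) - 1)/2)) = ((r i:ℝ) - 1)/2 := by
  have hb := hr1 r hr3 i
  have h3 : (3:ℝ) ≤ r i := by exact_mod_cast hr3 i
  exact Real.rpow_logb (by linarith) (by intro h; rw [h] at hb; linarith) (by linarith)

include hrodd hJdef ht0 hβ

/-- lower bound on the gap distance of any gap -/
lemma gapDist_lower (hn : 0 < n) (hCeq : C = ⋂ σ, KK r J σ) (hCsub : C ⊆ closedBall 0 1)
    (e : GapEnum β C) {k σ : ℕ} {c : Fin n → ℝ}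
    (hk : k ∈ e.J) (hc : c ∈ centers r J σ) (hGk : e.G k = ob c (hw r (σ+1))) :
    t / ((σ:ℝ) + 1 - m) ≤ gapDist β C e k := by
  classical
  have hJ1 : ∀ j ∈ J, ∀ i, 1 ≤ j i ∧ j i ≤ r i := fun j hj => ((hJdef j).mp hj).1
  have hm0 := m_nonneg r hr3 m hm
  have hm1 := m_lt_one r hr3 m hm
  have hden : (0:ℝ) < (σ:ℝ) + 1 - m := by
    have : (0:ℝ) ≤ (σ:ℝ) := Nat.cast_nonneg σ
    linarith
  set S := {t' | 0 < t' ∧ ∃ z, (affBox β (1/t') z ∩ e.G k).Nonempty ∧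
    (affBox β (1/t') z ∩ ((⋃ i ∈ e.J ∩ Iio k, e.G i) ∪ unboundedGap C)).Nonempty} with hS
  -- S is nonempty : a large box joining the gap to the unbounded component
  have hSne : S.Nonempty := by
    set i₀ : Fin n := ⟨0, hn⟩
    set b : ℝ := (r i₀ : ℝ) with hb
    have hb1 : 1 < b := hr1 r hr3 i₀
    set q : ℝ := hw r σ i₀ with hq
    have hq0 : 0 < q := hw_pos r hr3 σ i₀
    have hq1 : q ≤ 1 := hw_le_one r hr3 σ i₀
    have hq4 : 0 < 1 - q/4 := by linarith
    have hq4' : 1 - q/4 < 1 := by linarith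
    set L : ℝ := Real.logb b (1 - q/4)⁻¹ with hL
    have hL0 : 0 < L := Real.logb_pos hb1 ((one_lt_inv₀ hq4).mpr hq4')
    set t' : ℝ := t / L with ht'
    have ht'0 : 0 < t' := by rw [ht']; positivity
    have hβi₀ : β i₀ ^ (1/t') = 1 - q/4 := by
      rw [beta_rpow r t β ht0 hβ i₀ (hr3 i₀)]
      have : t * (1/t') = L := by
        rw [ht']; field_simp
      rw [this, ← hb, hL, Real.rpow_neg (by linarith), Real.rpow_logb (by linarith)
        (by intro h; rw [h] at hb1; linarith) (by positivity), inv_inv]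
    have hcb := centers_bound r J hr3 hJ1 σ c hc i₀
    refine ⟨t', ht'0, Function.update c i₀ ((c i₀ + (1 + q/4))/2), ⟨c, ?_, ?_⟩,
      ⟨Function.update c i₀ (1 + q/4), ?_, ?_⟩⟩
    · -- c in the box
      intro i
      by_cases h : i = i₀
      · subst h
        simp only [Function.update_self]
        rw [hβi₀, show c i₀ - (c i₀ + (1 + q/4))/2 = (c i₀ - (1 + q/4))/2 by ring, abs_div,
          abs_of_pos (by norm_num : (0:ℝ) < 2),
          abs_of_nonpos (by rw [← hq] at hcb; cases abs_le.mp hcb with | intro h1 h2 => linarith)]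
        rw [← hq] at hcb
        cases abs_le.mp hcb with | intro h1 h2 => linarith
      · simp only [Function.update_of_ne h, sub_self, abs_zero]
        rw [beta_rpow r t β ht0 hβ i (hr3 i)]
        exact le_of_lt (Real.rpow_pos_of_pos (hr0 r hr3 i) _)
    · rw [hGk]; exact mem_ob_self r c hr3
    · -- the outside point in the box
      intro i
      by_cases h : i = i₀
      · subst h
        simp only [Function.update_self]
        rw [hβi₀, show 1 + q/4 - (c i₀ + (1 + q/4))/2 = ((1 + q/4) - c i₀)/2 by ring, abs_div,
          abs_of_pos (by norm_num : (0:ℝ) < 2),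
          abs_of_pos (by rw [← hq] at hcb; cases abs_le.mp hcb with | intro h1 h2 => linarith)]
        rw [← hq] at hcb
        cases abs_le.mp hcb with | intro h1 h2 => linarith
      · simp only [Function.update_of_ne h, sub_self, abs_zero]
        rw [beta_rpow r t β ht0 hβ i (hr3 i)]
        exact le_of_lt (Real.rpow_pos_of_pos (hr0 r hr3 i) _)
    · right
      apply outside_unbounded C hCsub (i := i₀)
      simp only [Function.update_self]
      rw [abs_of_pos (by linarith)]
      linarith
  rw [gapDist, ← hS]
  apply le_csInf hSne
  rintro s ⟨hs0, z, ⟨x, hxbox, hxG⟩, ⟨y, hybox, hyM⟩⟩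
  -- the second point is outside the level-σ cell of the gap
  have hynot : y ∉ bx c (hw r σ) := by
    intro hyb
    rcases hyM with hyE | hyU
    · simp only [mem_iUnion, exists_prop, mem_inter_iff, mem_Iio] at hyE
      obtain ⟨i, ⟨hiJ, hik⟩, hyGi⟩ := hyE
      obtain ⟨σ', c', hc', hGi⟩ := gap_eq_ob r J hr3 hrodd hJdef C hCeq hCsub (e.isGap i hiJ)
      have hsize : sizeWrt β (e.G k) ≤ sizeWrt β (e.G i) := e.anti i hiJ k hk (le_of_lt hik)
      rw [hGk, hGi, sizeWrt_ob r J hr3 hrodd hJdef t β ht0 hβ hn hc,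
        sizeWrt_ob r J hr3 hrodd hJdef t β ht0 hβ hn hc'] at hsize
      have hσ' : σ' ≤ σ := by
        by_contra hcon
        push_neg at hcon
        have h1 : ((σ:ℝ)+1) < ((σ':ℝ)+1) := by
          have : (σ:ℝ) < σ' := by exact_mod_cast hcon
          linarith
        have h2 : t/((σ':ℝ)+1) < t/((σ:ℝ)+1) :=
          div_lt_div_of_pos_left ht0 (by positivity) h1
        linarith
      rcases lt_or_eq_of_le hσ' with hlt | heq
      · -- smaller level : G i is disjoint from all cells at its level
        have h1 : y ∈ KK r J (σ'+1) :=
          KK_anti r J hr3 hJ1 (by omega) (cell_subset_KK r J hc hyb)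
        have h2 := ob_inter_KK r J hr3 hrodd hJdef hc'
        rw [hGi] at hyGi
        exact absurd (mem_inter hyGi h1) (by rw [h2]; exact notMem_empty y)
      · -- same level : different centres are far apart
        subst heq
        have hcc : c' ≠ c := by
          intro hcc
          subst hcc
          exact absurd (e.inj i hiJ k hk (by rw [hGi, hGk])) (by omega)
        rcases centers_sep r J hr3 hJ1 σ' c hc c' hc' with hcc' | ⟨i₁, hsep⟩
        · exact hcc hcc'.symm
        · rw [hGi] at hyGi
          have h1 : |y i₁ - c' i₁| < hw r (σ'+1) i₁ := hyGi i₁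
          have h2 : |y i₁ - c i₁| ≤ hw r σ' i₁ := hyb i₁
          have h3 : hw r (σ'+1) i₁ < hw r σ' i₁ := hw_succ_lt r hr3 σ' i₁
          have : |c i₁ - c' i₁| < 2 * hw r σ' i₁ := by
            calc |c i₁ - c' i₁| = |(c i₁ - y i₁) + (y i₁ - c' i₁)| := by ring_nf
              _ ≤ |c i₁ - y i₁| + |y i₁ - c' i₁| := abs_add_le _ _
              _ = |y i₁ - c i₁| + |y i₁ - c' i₁| := by rw [abs_sub_comm]
              _ < 2 * hw r σ' i₁ := by linarith
          linarith
    · have := unboundedGap_inter_cell r J hr3 hrodd hJdef C hCeq hc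
      exact absurd (mem_inter hyU hyb) (by rw [this]; exact notMem_empty y)
  -- extract the coordinate giving the distance bound
  obtain ⟨i₁, hi₁⟩ : ∃ i₁, hw r σ i₁ < |y i₁ - c i₁| := by
    by_contra hcon
    push_neg at hcon
    exact hynot (fun i => hcon i)
  have hxc : |x i₁ - c i₁| < hw r (σ+1) i₁ := by
    rw [hGk] at hxG; exact hxG i₁
  have hxy : |x i₁ - y i₁| ≤ 2 * β i₁ ^ (1/s) := by
    calc |x i₁ - y i₁| = |(x i₁ - z i₁) + (z i₁ - y i₁)| := by ring_nf
      _ ≤ |x i₁ - z i₁| + |z i₁ - y i₁| := abs_add_le _ _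
      _ = |x i₁ - z i₁| + |y i₁ - z i₁| := by rw [abs_sub_comm (z i₁)]
      _ ≤ 2 * β i₁ ^ (1/s) := by linarith [hxbox i₁, hybox i₁]
  have hgap : hw r σ i₁ - hw r (σ+1) i₁ < 2 * β i₁ ^ (1/s) := by
    have : |y i₁ - c i₁| ≤ |x i₁ - y i₁| + |x i₁ - c i₁| := by
      calc |y i₁ - c i₁| = |(y i₁ - x i₁) + (x i₁ - c i₁)| := by ring_nf
        _ ≤ |y i₁ - x i₁| + |x i₁ - c i₁| := abs_add_le _ _
        _ = |x i₁ - y i₁| + |x i₁ - c i₁| := by rw [abs_sub_comm]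
    linarith
  -- convert to an exponent inequality
  set b : ℝ := (r i₁ : ℝ) with hb
  have hb1 : 1 < b := hr1 r hr3 i₁
  have hb0 : (0:ℝ) < b := by linarith
  set cc : ℝ := Real.logb b (((r i₁:ℝ) - 1)/2) with hcc
  have hmcc : m ≤ cc := hm.2 ⟨i₁, rfl⟩
  have hkey : b ^ (-((σ:ℝ)+1) + cc) < b ^ (-(t * (1/s))) := by
    have e1 : hw r σ i₁ - hw r (σ+1) i₁ = 2 * b ^ (-((σ:ℝ)+1) + cc) := by
      rw [hw_rpow r hr3 σ i₁, hw_rpow r hr3 (σ+1) i₁, Real.rpow_add hb0, ← hb]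
      rw [hcc, rpow_logb_half r hr3 i₁, ← hb]
      have e2 : b ^ (-(σ:ℝ)) = b * b ^ (-((σ:ℝ)+1)) := by
        rw [show -(σ:ℝ) = 1 + (-((σ:ℝ)+1)) by ring, Real.rpow_add hb0, Real.rpow_one]
      have e3 : (-(((σ:ℕ)+1:ℕ)):ℝ) = -((σ:ℝ)+1) := by push_cast; ring
      rw [e3] at *
      rw [e2]
      ring
    rw [beta_rpow r t β ht0 hβ i₁ (hr3 i₁), ← hb] at hgap
    linarith [e1 ▸ hgap]
  rw [Real.rpow_lt_rpow_left_iff hb1] at hkey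
  have h1 : t * (1/s) < (σ:ℝ) + 1 - cc := by linarith
  have h2 : t * (1/s) < (σ:ℝ) + 1 - m := by linarith
  rw [mul_one_div, div_lt_iff₀ hs0] at h2
  rw [div_le_iff₀ hden]
  nlinarith

end gdsec

section finalsec
variable (hr3 : ∀ i, 3 ≤ r i) (hrodd : ∀ i, Odd (r i))
variable (hJdef : ∀ j, j ∈ J ↔ ((∀ i, 1 ≤ j i ∧ j i ≤ r i) ∧ j ≠ fun i => (r i + 1) / 2))
variable (C : Set (Fin n → ℝ)) (t : ℝ) (β : Fin n → ℝ) (m : ℝ)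
variable (ht0 : 0 < t) (hβ : β = fun j => ((r j : ℝ)⁻¹) ^ t)
variable (hm : IsLeast (Set.range fun i => Real.logb (r i) (((r i : ℝ) - 1) / 2)) m)

include hr3 hrodd hJdef ht0 hβ

lemma zero_mem_centers : (0 : Fin n → ℝ) ∈ centers r J 0 := by
  rw [centers_zero]; exact rfl

omit ht0 hβ in
lemma zero_not_KK1 : (0 : Fin n → ℝ) ∉ KK r J 1 := by
  intro h0
  simp only [KK, centers_succ, centers_zero, mem_iUnion, exists_prop,
    mem_singleton_iff, iUnion_iUnion_eq_left] at h0
  obtain ⟨c, ⟨j, hjJ, rfl⟩, hmem⟩ := h0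
  have hctr : j = fun i => (r i + 1)/2 := by
    funext i
    obtain ⟨k, hk⟩ := hrodd i
    have hh := hw_pos r hr3 1 i
    have h1 := hmem i
    simp only [Pi.zero_apply, zero_add] at h1
    have e : off r 1 j i = (2*(j i:ℝ) - r i - 1) * hw r 1 i := rfl
    rw [show |(0:ℝ) - off r 1 j i| = |off r 1 j i| by rw [zero_sub, abs_neg], e, abs_mul,
      abs_of_pos hh] at h1
    have h2 : |2*(j i:ℝ) - r i - 1| ≤ 1 := by
      by_contra hcon
      push_neg at hcon
      nlinarith
    rw [abs_le] at h2
    have hi1 : (-1:ℤ) ≤ 2*(j i:ℤ) - r i - 1 := by exact_mod_cast h2.1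
    have hi2 : (2*(j i:ℤ) - r i - 1 : ℤ) ≤ 1 := by exact_mod_cast h2.2
    omega
  rw [hJdef] at hjJ
  exact hjJ.2 hctr

omit ht0 hβ in
lemma ob_zero_ne {σ : ℕ} {c : Fin n → ℝ} (hc : c ∈ centers r J (σ+1)) :
    ob c (hw r (σ+2)) ≠ ob (0 : Fin n → ℝ) (hw r 1) := by
  have hJ1 : ∀ j ∈ J, ∀ i, 1 ≤ j i ∧ j i ≤ r i := fun j hj => ((hJdef j).mp hj).1
  intro h
  have h0 : (0 : Fin n → ℝ) ∈ ob (0:Fin n→ℝ) (hw r 1) := mem_ob_self r 0 hr3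
  rw [← h] at h0
  have h1 : (0 : Fin n → ℝ) ∈ bx c (hw r (σ+1)) :=
    fun i => le_of_lt (lt_of_lt_of_le (h0 i) (le_of_lt (hw_succ_lt r hr3 (σ+1) i)))
  have h2 : (0 : Fin n → ℝ) ∈ KK r J 1 :=
    KK_anti r J hr3 hJ1 (by omega) (cell_subset_KK r J hc h1)
  exact zero_not_KK1 r J hr3 hrodd hJdef h2

/-- identification of the first gap in the enumeration -/
lemma G0_spec (hn : 0 < n) (hCeq : C = ⋂ σ, KK r J σ) (hCsub : C ⊆ closedBall 0 1)
    (e : GapEnum β C) : 0 ∈ e.J ∧ e.G 0 = ob (0:Fin n→ℝ) (hw r 1) := by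
  have h00 := zero_mem_centers r J hr3 hrodd hJdef t β ht0 hβ
  have hGap : IsBoundedGap C (ob (0:Fin n→ℝ) (hw r 1)) :=
    ob_isBoundedGap r J hr3 hrodd hJdef C hCeq h00
  obtain ⟨k₀, hk₀J, hk₀⟩ := e.surj _ hGap
  have h0J : 0 ∈ e.J := e.downward 0 k₀ (Nat.zero_le _) hk₀J
  rcases Nat.eq_zero_or_pos k₀ with h | h
  · subst h; exact ⟨h0J, hk₀⟩
  · refine ⟨h0J, ?_⟩
    obtain ⟨σ', c', hc', hG0⟩ := gap_eq_ob r J hr3 hrodd hJdef C hCeq hCsub (e.isGap 0 h0J)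
    have hanti := e.anti 0 h0J k₀ hk₀J (Nat.zero_le _)
    rw [hk₀, hG0, sizeWrt_ob r J hr3 hrodd hJdef t β ht0 hβ hn hc',
      show ((0:Fin n→ℝ)) = (0:Fin n→ℝ) from rfl] at hanti
    have hsz := sizeWrt_ob r J hr3 hrodd hJdef t β ht0 hβ hn h00
    norm_num at hsz
    rw [hsz] at hanti
    -- t ≤ t/(σ'+1) forces σ' = 0
    have hσ'0 : σ' = 0 := by
      by_contra hcon
      have h1 : (2:ℝ) ≤ (σ':ℝ) + 1 := by
        have : 1 ≤ σ' := by omega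
        have : (1:ℝ) ≤ (σ':ℝ) := by exact_mod_cast this
        linarith
      have h2 : t/((σ':ℝ)+1) ≤ t/2 := by
        apply div_le_div_of_nonneg_left (le_of_lt ht0) (by norm_num) h1
      linarith
    subst hσ'0
    rw [centers_zero] at hc'
    have : c' = 0 := hc'
    rw [hG0, this]

/-- upper bound for the gap distance of the first gap -/
lemma gapDist_upper0 (hCeq : C = ⋂ σ, KK r J σ) (hCsub : C ⊆ closedBall 0 1)
    (e : GapEnum β C) (hG0 : e.G 0 = ob (0:Fin n→ℝ) (hw r 1))
    (hm : IsLeast (Set.range fun i => Real.logb (r i) (((r i : ℝ) - 1) / 2)) m) :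
    gapDist β C e 0 ≤ t / (1 - m) := by
  classical
  have hm0 := m_nonneg r hr3 m hm
  have hm1 := m_lt_one r hr3 m hm
  have hden : (0:ℝ) < 1 - m := by linarith
  apply le_of_forall_gt_imp_ge_of_dense
  intro t' ht'
  have ht'pos : 0 < t' := lt_trans (by positivity) ht'
  -- show t' is in the defining set
  have htt' : t * (1/t') < 1 - m := by
    rw [mul_one_div, div_lt_iff₀ ht'pos]
    rw [div_lt_iff₀ hden] at ht'
    linarith [mul_comm t' (1-m)]
  obtain ⟨⟨istar, histar⟩, _⟩ := hm
  set b : ℝ := (r istar : ℝ) with hb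
  have hb1 : 1 < b := hr1 r hr3 istar
  have hb0 : (0:ℝ) < b := by linarith
  set h : ℝ := β istar ^ (1/t') with hh
  have hhval : h = b ^ (-(t * (1/t'))) := by
    rw [hh, beta_rpow r t β ht0 hβ istar (hr3 istar), ← hb]
  have histar' : Real.logb (r istar) (((r istar:ℝ) - 1)/2) = m := histar
  have hc2 : b ^ (m - 1) = (1 - b⁻¹)/2 := by
    rw [show m - 1 = m + (-1) by ring, Real.rpow_add hb0, ← histar', ← hb,
      rpow_logb_half r hr3 istar, ← hb, Real.rpow_neg_one]
    field_simp
  have hhgt : (1 - b⁻¹)/2 < h := by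
    rw [← hc2, hhval, Real.rpow_lt_rpow_left_iff hb1]
    linarith
  have hhlt : h < 1 := by
    have h1 : b ^ (-(t * (1/t'))) < b ^ (0:ℝ) := by
      rw [Real.rpow_lt_rpow_left_iff hb1]
      have : 0 < t * (1/t') := by positivity
      linarith
    rw [hhval]
    simpa using h1
  have hbinv : 0 < b⁻¹ := by positivity
  have hbinv1 : b⁻¹ < 1 := by
    rw [inv_lt_one_iff₀]; right; exact hb1
  set δ : ℝ := min ((2*h - (1 - b⁻¹))/2) b⁻¹ with hδ
  have hδ0 : 0 < δ := by
    rw [hδ]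
    apply lt_min
    · linarith
    · exact hbinv
  have hδb : δ ≤ b⁻¹ := min_le_right _ _
  have hδh : δ ≤ (2*h - (1 - b⁻¹))/2 := min_le_left _ _
  have hpos : ∀ i, 0 < β i ^ (1/t') := by
    intro i
    rw [beta_rpow r t β ht0 hβ i (hr3 i)]
    exact Real.rpow_pos_of_pos (hr0 r hr3 i) _
  have hw1 : hw r 1 istar = b⁻¹ := by
    rw [hw, pow_one, hb]
  refine csInf_le ⟨0, fun s hs => le_of_lt hs.1⟩ ⟨ht'pos,
    Function.update (0:Fin n→ℝ) istar (b⁻¹ + h - δ),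
    ⟨Function.update (0:Fin n→ℝ) istar (b⁻¹ - δ), ?_, ?_⟩,
    ⟨Function.update (0:Fin n→ℝ) istar (b⁻¹ + 2*h - δ), ?_, ?_⟩⟩
  · intro i
    by_cases hi : i = istar
    · subst hi
      simp only [Function.update_self]
      rw [show b⁻¹ - δ - (b⁻¹ + h - δ) = -h by ring, abs_neg, abs_of_pos (by linarith), ← hh]
    · simp only [Function.update_of_ne hi, sub_self, abs_zero]
      exact le_of_lt (hpos i)
  · rw [hG0]
    intro i
    by_cases hi : i = istar
    · subst hi
      simp only [Function.update_self, Pi.zero_apply, sub_zero]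
      rw [hw1, abs_of_nonneg (by linarith)]
      linarith
    · simp only [Function.update_of_ne hi, Pi.zero_apply, sub_zero, abs_zero]
      exact hw_pos r hr3 1 i
  · intro i
    by_cases hi : i = istar
    · subst hi
      simp only [Function.update_self]
      rw [show b⁻¹ + 2*h - δ - (b⁻¹ + h - δ) = h by ring, abs_of_pos (by linarith), ← hh]
    · simp only [Function.update_of_ne hi, sub_self, abs_zero]
      exact le_of_lt (hpos i)
  · right
    apply outside_unbounded C hCsub (i := istar)
    simp only [Function.update_self]
    rw [abs_of_pos (by linarith)]
    linarith

end finalsec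

end SAC
end

/-- the affine thickness of the `r`-self-affine Sierpiński carpet. -/
theorem thickness_of_self_affine_sierpinski_carpet (n : ℕ) (hn : 0 < n)
    (r : Fin n → ℕ) (hr : ∀ i, 3 ≤ r i ∧ Odd (r i))
    (f : (Fin n → ℕ) → (Fin n → ℝ) → (Fin n → ℝ))
    (hf : ∀ j x, f j x =
      fun i => (x i + 2 * (j i : ℝ) - (r i : ℝ) - 1) / (r i : ℝ))
    (J : Set (Fin n → ℕ))
    (hJ : J = {j | (∀ i, 1 ≤ j i ∧ j i ≤ r i) ∧ j ≠ fun i => (r i + 1) / 2})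
    (C : Set (Fin n → ℝ)) (hC : IsCompact C) (hCne : C.Nonempty)
    (hCsub : C ⊆ closedBall 0 1)
    (hCattr : C = ⋃ j ∈ J, f j '' C)
    (hCuniq : ∀ K : Set (Fin n → ℝ), IsCompact K → K.Nonempty →
      K = ⋃ j ∈ J, f j '' K → K = C)
    (t : ℝ) (ht : t ∈ Set.Ioo (0 : ℝ) 1)
    (β : Fin n → ℝ) (hβ : β = fun j => ((r j : ℝ)⁻¹) ^ t)
    (m : ℝ)
    (hm : IsLeast (Set.range fun i => Real.logb (r i) (((r i : ℝ) - 1) / 2)) m) :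
    ∀ e : GapEnum β C, thicknessA β C e = ((t⁻¹ * m : ℝ) : EReal) := by
  intro e
  have hr3 : ∀ i, 3 ≤ r i := fun i => (hr i).1
  have hrodd : ∀ i, Odd (r i) := fun i => (hr i).2
  have hJdef : ∀ j, j ∈ J ↔ ((∀ i, 1 ≤ j i ∧ j i ≤ r i) ∧ j ≠ fun i => (r i + 1) / 2) := by
    intro j; rw [hJ]; exact Iff.rfl
  have ht0 : 0 < t := ht.1
  have hCeq : C = ⋂ σ, SAC.KK r J σ :=
    SAC.C_eq_iInter r J hr3 hrodd hJdef f hf C hCne hCsub hCattr hCuniq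
  have hm0 := SAC.m_nonneg r hr3 m hm
  have hm1 := SAC.m_lt_one r hr3 m hm
  obtain ⟨h0J, hG0⟩ := SAC.G0_spec r J hr3 hrodd hJdef C t β ht0 hβ hn hCeq hCsub e
  have hJne : e.J ≠ ∅ := by
    intro h
    rw [h] at h0J
    exact notMem_empty 0 h0J
  have hcls : ∀ k ∈ e.J, ∃ σ : ℕ, ∃ c ∈ SAC.centers r J σ,
      e.G k = SAC.ob c (SAC.hw r (σ+1)) :=
    fun k hk => SAC.gap_eq_ob r J hr3 hrodd hJdef C hCeq hCsub (e.isGap k hk)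
  have hgdlow : ∀ k ∈ e.J, ∀ σ : ℕ, ∀ c ∈ SAC.centers r J σ,
      e.G k = SAC.ob c (SAC.hw r (σ+1)) → t / ((σ:ℝ) + 1 - m) ≤ gapDist β C e k :=
    fun k hk σ c hc hGk =>
      SAC.gapDist_lower r J hr3 hrodd hJdef C t β m ht0 hβ hm hn hCeq hCsub e hk hc hGk
  have hdenpos : ∀ σ : ℕ, (0:ℝ) < (σ:ℝ) + 1 - m := by
    intro σ
    have : (0:ℝ) ≤ (σ:ℝ) := Nat.cast_nonneg σ
    linarith
  have hgdpos : ∀ k ∈ e.J, 0 < gapDist β C e k := by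
    intro k hk
    obtain ⟨σ, c, hc, hGk⟩ := hcls k hk
    have := hgdlow k hk σ c hc hGk
    have hpos : (0:ℝ) < t / ((σ:ℝ) + 1 - m) := div_pos ht0 (hdenpos σ)
    linarith
  rw [thicknessA, if_neg hJne, if_neg (by
    rintro ⟨k, hk, h0⟩
    exact absurd h0 (ne_of_gt (hgdpos k hk)))]
  -- compute the term at k = 0
  have hsz0 : sizeWrt β (e.G 0) = t := by
    rw [hG0]
    have := SAC.sizeWrt_ob r J hr3 hrodd hJdef t β ht0 hβ hn
      (SAC.zero_mem_centers r J hr3 hrodd hJdef t β ht0 hβ)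
    rw [this]
    norm_num
  have hgd0 : gapDist β C e 0 = t / (1 - m) := by
    apply le_antisymm
    · exact SAC.gapDist_upper0 r J hr3 hrodd hJdef C t β m ht0 hβ hCeq hCsub e hG0 hm
    · have := hgdlow 0 h0J 0 0 (SAC.zero_mem_centers r J hr3 hrodd hJdef t β ht0 hβ) hG0
      norm_num at this
      exact this
  have hterm0 : invE (sizeWrt β (e.G 0)) - invE (gapDist β C e 0) = ((t⁻¹ * m : ℝ) : EReal) := by
    rw [hsz0, hgd0, invE, invE, if_neg (ne_of_gt ht0),
      if_neg (ne_of_gt (div_pos ht0 (by linarith : (0:ℝ) < 1 - m)))]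
    rw [inv_div, ← EReal.coe_sub]
    congr 1
    field_simp
    ring
  apply le_antisymm
  · calc (⨅ k ∈ e.J, (invE (sizeWrt β (e.G k)) - invE (gapDist β C e k)))
        ≤ invE (sizeWrt β (e.G 0)) - invE (gapDist β C e 0) := iInf₂_le 0 h0J
      _ = ((t⁻¹ * m : ℝ) : EReal) := hterm0
  · apply le_iInf₂
    intro k hk
    obtain ⟨σ, c, hc, hGk⟩ := hcls k hk
    have hszk : sizeWrt β (e.G k) = t / ((σ:ℝ)+1) := by
      rw [hGk]
      exact_mod_cast SAC.sizeWrt_ob r J hr3 hrodd hJdef t β ht0 hβ hn hc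
    have hσpos : (0:ℝ) < (σ:ℝ) + 1 := by positivity
    have hgdk := hgdlow k hk σ c hc hGk
    have hgdkpos := hgdpos k hk
    rw [hszk, invE, invE, if_neg (ne_of_gt (div_pos ht0 hσpos)),
      if_neg (ne_of_gt hgdkpos), inv_div, ← EReal.coe_sub, EReal.coe_le_coe_iff]
    have hinv : (gapDist β C e k)⁻¹ ≤ ((σ:ℝ) + 1 - m)/t := by
      have h1 : (t / ((σ:ℝ) + 1 - m))⁻¹ = ((σ:ℝ) + 1 - m)/t := inv_div t _
      rw [← h1]
      exact inv_anti₀ (div_pos ht0 (hdenpos σ)) hgdk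
    have heq : ((σ:ℝ)+1)/t - ((σ:ℝ)+1-m)/t = t⁻¹ * m := by
      field_simp
      ring
    linarith
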